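/- arXiv:2210.15276 — 3 statements merged into one kernel-verified Lean document; each statement's English description precedes it below -/
import Mathlib

section
/- The action Ψ generated by all coordinate permutations T_σ and all translations S_α of the group X=(ℤ/2)^ℕ with Haar measure belongs to the class S(2m,2m+1) for every m≥1, but Ψ does not possess the JR-property; in fact Ψ ∉ S(3,4). -/
open MeasureTheory Filter Set
open scoped ENNReal symmDiff

section Defs

variable {α : Type*} [MeasurableSpace α]

/-- The class `S(m,n)`: every self-joining of order `n` (a measure on `X^n` with all
coordinate projections equal to `μ`, invariant under the diagonal action of `T`) whose
projections onto all `m`-dimensional faces equal `μ^m` coincides with the product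
measure `μ^n`. -/
def InS (μ : Measure α) [IsFiniteMeasure μ] (T : α → α) (m n : ℕ) : Prop :=
  ∀ ν : Measure (Fin n → α),
    (∀ i, Measure.map (fun x => x i) ν = μ) →
    (Measure.map (fun x i => T (x i)) ν = ν) →
    (∀ e : Fin m → Fin n, Function.Injective e →
      Measure.map (fun x i => x (e i)) ν = Measure.pi fun _ => μ) →
    ν = Measure.pi fun _ => μ

/-- The JR-property: for every `n > 2`, the only pairwise independent self-joining of
order `n` is the product measure, i.e. membership in `S(2,n)` for all `n > 2`. -/
def JRProperty (μ : Measure α) [IsFiniteMeasure μ] (T : α → α) : Prop :=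
  ∀ n : ℕ, 2 < n → InS μ T 2 n

/-- Weak mixing: the diagonal product `T × T` is ergodic for `μ ⊗ μ`. -/
def WeaklyMixing (μ : Measure α) (T : α → α) : Prop :=
  Ergodic (fun p : α × α => (T p.1, T p.2)) (μ.prod μ)

/-- Partial sums `k₁ + ⋯ + k_i` of an `n`-tuple of natural numbers. -/
def cumSum {n : ℕ} (k : Fin n → ℕ) (i : Fin (n + 1)) : ℕ :=
  ∑ l : Fin n, if (l : ℕ) < (i : ℕ) then k l else 0

/-- Mixing of multiplicity `n`:
`μ(A₀ ∩ T^{-k₁}A₁ ∩ T^{-(k₁+k₂)}A₂ ∩ ⋯) → μ(A₀)⋯μ(A_n)` as `k₁,…,k_n → ∞`. -/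
def MixingOfOrder (μ : Measure α) (T : α → α) (n : ℕ) : Prop :=
  ∀ A : Fin (n + 1) → Set α, (∀ i, MeasurableSet (A i)) →
    Tendsto (fun k : Fin n → ℕ => μ (⋂ i, T^[cumSum k i] ⁻¹' A i))
      atTop (nhds (∏ i, μ (A i)))

/-- Convergence of (Koopman operators of) a sequence of transformations to `Θ`
in the weak operator topology, expressed on indicators of measurable sets. -/
def TendstoWeakTheta (μ : Measure α) (T : ℕ → α → α) : Prop :=
  ∀ A B : Set α, MeasurableSet A → MeasurableSet B →
    Tendsto (fun j => μ ((T j) ⁻¹' A ∩ B)) atTop (nhds (μ A * μ B))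

/-- A fixed countable family of measurable sets, dense in the measure algebra. -/
def DenseFamily (μ : Measure α) (A : ℕ → Set α) : Prop :=
  (∀ i, MeasurableSet (A i)) ∧
    ∀ B : Set α, MeasurableSet B → ∀ ε : ℝ, 0 < ε → ∃ i, (μ (B ∆ A i)).toReal < ε

/-- The Halmos metric `ρ(P,Q) = Σ_i 2^{-i} (μ(P A_i Δ Q A_i) + μ(P⁻¹ A_i Δ Q⁻¹ A_i))`
associated with a fixed dense family `{A_i}`. -/
noncomputable def halmosF (μ : Measure α) (A : ℕ → Set α) (P Q : α → α) : ℝ :=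
  ∑' i : ℕ, (2 : ℝ)⁻¹ ^ i *
    ((μ ((P '' A i) ∆ (Q '' A i))).toReal + (μ ((P ⁻¹' A i) ∆ (Q ⁻¹' A i))).toReal)

/-- A concrete metric `dist_w(·,Θ)` inducing the weak operator topology on Koopman
operators (relative to the dense family `{A_i}`): a weighted sum of the deviations of
the matrix coefficients `μ(T⁻¹A_i ∩ A_k)` from those `μ(A_i)μ(A_k)` of `Θ`. -/
noncomputable def distwTheta (μ : Measure α) (A : ℕ → Set α) (T : α → α) : ℝ :=
  ∑' p : ℕ × ℕ, (2 : ℝ)⁻¹ ^ (p.1 + p.2) *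
    |(μ (T ⁻¹' A p.1 ∩ A p.2)).toReal - (μ (A p.1)).toReal * (μ (A p.2)).toReal|

/-- Relative openness with respect to a distance function. -/
def IsOpenIn {β : Type*} (d : β → β → ℝ) (E U : Set β) : Prop :=
  U ⊆ E ∧ ∀ x ∈ U, ∃ ε : ℝ, 0 < ε ∧ ∀ y ∈ E, d x y < ε → y ∈ U

/-- Being a `Gδ` subset of `E` with respect to a distance function. -/
def IsGdeltaIn {β : Type*} (d : β → β → ℝ) (E G : Set β) : Prop :=
  ∃ U : ℕ → Set β, (∀ n, IsOpenIn d E (U n)) ∧ G = ⋂ n, U n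

/-- Being a dense subset of `E` with respect to a distance function. -/
def IsDenseIn {β : Type*} (d : β → β → ℝ) (E G : Set β) : Prop :=
  G ⊆ E ∧ ∀ x ∈ E, ∀ ε : ℝ, 0 < ε → ∃ y ∈ G, d x y < ε

end Defs

section Skew

variable {X Y : Type*}

/-- The skew product `R(x,y) = (Sx, R_x y)`. -/
def skewMap (S : X → X) (c : X → Y → Y) : X × Y → X × Y :=
  fun p => (S p.1, c p.1 p.2)

/-- The cocycle `C(x,p) = R_{S^{p-1}x} ∘ ⋯ ∘ R_{Sx} ∘ R_x` of a skew product. -/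
def cocycleF (S : X → X) (c : X → Y → Y) (x : X) : ℕ → Y → Y
  | 0 => id
  | p + 1 => c (S^[p] x) ∘ cocycleF S c x p

/-- The fiber transformation `R_x` of a skew product `R`. -/
def fib (R : X × Y → X × Y) (x : X) (y : Y) : Y := (R (x, y)).2

end Skew

/-- `Ext(S)`: all extensions of `S`, i.e. automorphisms of `(X×X, μ⊗μ)` of the form
`R(x,y) = (Sx, R_x y)` for a measurable family of `μ`-preserving automorphisms `{R_x}`. -/
def ExtSet {X : Type*} [MeasurableSpace X] (μ : Measure X) (S : X → X) :
    Set ((X × X) ≃ᵐ (X × X)) :=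
  {R | ∃ c : X → (X ≃ᵐ X), Measurable (fun p : X × X => c p.1 p.2) ∧
    (∀ x, MeasurePreserving (c x) μ μ) ∧ ∀ p : X × X, R p = (S p.1, c p.1 p.2)}

/-- The `(I,Θ)`-property of the cocycle of a skew product `R = (S, R_x)`:
there is a sequence `p_j → ∞` along which the cocycle is locally rigid
(on every set of positive measure, for a.e. point, a subsequence of the cocycle returns
to the identity while the base point returns to the set) and relatively mixing in measure
(`dist_w(C(x,p_j), Θ) < ε` on a set of measure tending to `1`). -/
def HasIThetaCocycle {X : Type*} [MeasurableSpace X] (μ : Measure X) (Afam : ℕ → Set X)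
    (S : X → X) (c : X → X → X) : Prop :=
  ∃ p : ℕ → ℕ, Tendsto p atTop atTop ∧
    (∀ A : Set X, MeasurableSet A → 0 < μ A →
      ∀ᵐ x ∂μ.restrict A, ∃ φ : ℕ → ℕ, StrictMono φ ∧ (∀ k, S^[p (φ k)] x ∈ A) ∧
        Tendsto (fun k => halmosF μ Afam (cocycleF S c x (p (φ k))) id) atTop (nhds 0)) ∧
    (∀ ε : ℝ, 0 < ε →
      Tendsto (fun j => μ {x | distwTheta μ Afam (cocycleF S c x (p j)) < ε})
        atTop (nhds 1))

/-- Relative mixing of multiplicity `n` for a skew product `R` on `X × Y`: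
the projection onto `L²(X,μ)⊗1` (i.e. the fiberwise `ν`-measure) of the indicator of
`H₀ ∩ R^{k₁}H₁ ∩ ⋯ ∩ R^{k₁+⋯+k_n}H_n`, for horizontal sets `H_i = X × B_i`,
converges in measure to the constant `ν(B₀)⋯ν(B_n)` as `k₁,…,k_n → ∞`. -/
def RelMixingOfOrder {X Y : Type*} [MeasurableSpace X] [MeasurableSpace Y]
    (μ : Measure X) (ν : Measure Y) (R : X × Y → X × Y) (n : ℕ) : Prop :=
  ∀ B : Fin (n + 1) → Set Y, (∀ i, MeasurableSet (B i)) → ∀ δ : ℝ, 0 < δ →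
    Tendsto (fun k : Fin n → ℕ =>
        μ {x | δ ≤ |(ν {y | ∀ i, (x, y) ∈ R^[cumSum k i] '' (Set.univ ×ˢ B i)}).toReal -
          ∏ i, (ν (B i)).toReal|})
      atTop (nhds 0)

/-- A generator of the action `Ψ`: a coordinate permutation `T_σ` or a translation `S_α`
of the group `X = (ℤ/2)^ℕ`. -/
def IsGenPsi (g : (ℕ → ZMod 2) → (ℕ → ZMod 2)) : Prop :=
  (∃ σ : Equiv.Perm ℕ, g = fun x i => x (σ i)) ∨ (∃ α : ℕ → ZMod 2, g = fun x => x + α)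

/-- The class `S(m,n)` for the group action `Ψ` generated by all coordinate permutations
and all translations of `(ℤ/2)^ℕ`: every order-`n` self-joining of the action whose
projections onto all `m`-dimensional faces equal `μ^m` is the product measure `μ^n`. -/
def InSPsi (μ : Measure (ℕ → ZMod 2)) [IsProbabilityMeasure μ] (m n : ℕ) : Prop :=
  ∀ ν : Measure (Fin n → (ℕ → ZMod 2)),
    (∀ i, Measure.map (fun x => x i) ν = μ) →
    (∀ g, IsGenPsi g → Measure.map (fun x i => g (x i)) ν = ν) →
    (∀ e : Fin m → Fin n, Function.Injective e →
      Measure.map (fun x i => x (e i)) ν = Measure.pi fun _ => μ) →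
    ν = Measure.pi fun _ => μ

section PsiAux

namespace PsiProof

lemma zmod2_cases (a : ZMod 2) : a = 0 ∨ a = 1 := by revert a; decide

noncomputable def eps : ZMod 2 → ℝ := fun z => if z = 0 then 1 else -1

lemma eps_zero : eps 0 = 1 := by simp [eps]

lemma eps_add (a b : ZMod 2) : eps (a + b) = eps a * eps b := by
  have h2 : (1 : ZMod 2) + 1 = 0 := by decide
  rcases zmod2_cases a with ha | ha <;> rcases zmod2_cases b with hb | hb <;>
    subst ha <;> subst hb <;> rw [eps] <;> simp only [h2, add_zero, zero_add] <;>
      norm_num [eps]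

lemma eps_mul_self (a : ZMod 2) : eps a * eps a = 1 := by
  rcases zmod2_cases a with ha | ha <;> subst ha <;> norm_num [eps]

lemma eps_mul_of_ne {a b : ZMod 2} (h : a ≠ b) : eps a * eps b = -1 := by
  rcases zmod2_cases a with ha | ha <;> rcases zmod2_cases b with hb | hb <;>
    subst ha <;> subst hb <;> first | (exact absurd rfl h) | norm_num [eps]

lemma eps_abs (a : ZMod 2) : ‖eps a‖ ≤ 1 := by
  rcases zmod2_cases a with ha | ha <;> subst ha <;> norm_num [eps]

lemma eps_sum {ι : Type*} (t : Finset ι) (g : ι → ZMod 2) :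
    eps (∑ i ∈ t, g i) = ∏ i ∈ t, eps (g i) := by
  classical
  induction t using Finset.cons_induction with
  | empty => simp [eps_zero]
  | cons a s ha ih => rw [Finset.sum_cons, Finset.prod_cons, eps_add, ih]

section Generic

variable {α : Type*} [MeasurableSpace α] {ι : Type*} [Countable ι]
variable (L : ι → α → ZMod 2)

def cylSet (S : Finset ι) (f : ι → ZMod 2) : Set α := {ω | ∀ i ∈ S, L i ω = f i}

noncomputable def chi (t : Finset ι) : α → ℝ := fun ω => eps (∑ i ∈ t, L i ω)

variable (hL : ∀ i, Measurable (L i))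

lemma measurable_add_zmod {f g : α → ZMod 2} (hf : Measurable f) (hg : Measurable g) :
    Measurable (fun ω => f ω + g ω) := by
  have : (fun ω => f ω + g ω) =
      (fun p : ZMod 2 × ZMod 2 => p.1 + p.2) ∘ (fun ω => (f ω, g ω)) := rfl
  rw [this]
  exact (measurable_of_countable _).comp (hf.prodMk hg)

include hL in
lemma measurable_sumL (t : Finset ι) : Measurable (fun ω => ∑ i ∈ t, L i ω) := by
  classical
  induction t using Finset.cons_induction with
  | empty => simpa using measurable_const
  | cons a s ha ih =>
      simp only [Finset.sum_cons]
      exact measurable_add_zmod (hL a) ih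

include hL in
lemma measurable_chi (t : Finset ι) : Measurable (chi L t) :=
  (measurable_of_countable eps).comp (measurable_sumL L hL t)

lemma chi_bound (t : Finset ι) (ω : α) : ‖chi L t ω‖ ≤ 1 := eps_abs _

include hL in
lemma integrable_chi (ν : Measure α) [IsFiniteMeasure ν] (t : Finset ι) :
    Integrable (chi L t) ν := by
  refine Integrable.mono' (integrable_const 1) ((measurable_chi L hL t).aestronglyMeasurable) ?_
  exact Filter.Eventually.of_forall fun ω => chi_bound L t ω

include hL in
lemma measurableSet_cyl (S : Finset ι) (f : ι → ZMod 2) : MeasurableSet (cylSet L S f) := by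
  have : cylSet L S f = ⋂ i ∈ (S : Set ι), (L i) ⁻¹' {f i} := by
    ext ω; simp [cylSet]
  rw [this]
  exact MeasurableSet.biInter (S : Set ι).to_countable
    (fun i _ => (hL i) (measurableSet_singleton _))

variable {ν : Measure α}

include hL in
lemma inv [IsProbabilityMeasure ν] (S : Finset ι) (f : ι → ZMod 2) :
    (ν (cylSet L S f)).toReal =
      (1/2 : ℝ) ^ S.card * ∑ t ∈ S.powerset, (∏ i ∈ t, eps (f i)) * ∫ ω, chi L t ω ∂ν := by
  classical
  have hmeas := measurableSet_cyl L hL S f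
  have key : ∀ ω, (cylSet L S f).indicator (1 : α → ℝ) ω =
      (1/2 : ℝ) ^ S.card * ∑ t ∈ S.powerset, (∏ i ∈ t, eps (f i)) * chi L t ω := by
    intro ω
    have hprod : ∏ i ∈ S, ((eps (f i) * eps (L i ω)) + 1) =
        ∑ t ∈ S.powerset, (∏ i ∈ t, eps (f i)) * chi L t ω := by
      rw [Finset.prod_add]
      refine Finset.sum_congr rfl fun t ht => ?_
      rw [Finset.prod_const_one, mul_one, Finset.prod_mul_distrib]
      rw [chi, eps_sum]
    by_cases hω : ω ∈ cylSet L S f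
    · rw [Set.indicator_of_mem hω]
      have : ∀ i ∈ S, (eps (f i) * eps (L i ω)) + 1 = 2 := by
        intro i hi
        rw [hω i hi, eps_mul_self]; norm_num
      rw [← hprod, Finset.prod_congr rfl this, Finset.prod_const]
      simp only [Pi.one_apply]
      rw [← mul_pow]
      norm_num
    · rw [Set.indicator_of_notMem hω]
      simp only [cylSet, Set.mem_setOf_eq, not_forall] at hω
      obtain ⟨i₀, hi₀, hne⟩ := hω
      rw [← hprod, Finset.prod_eq_zero hi₀, mul_zero]
      rw [eps_mul_of_ne (Ne.symm hne)]; norm_num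
  have hint : ∀ t ∈ S.powerset, Integrable (fun ω => (∏ i ∈ t, eps (f i)) * chi L t ω) ν :=
    fun t _ => (integrable_chi L hL ν t).const_mul _
  calc (ν (cylSet L S f)).toReal = ∫ ω, (cylSet L S f).indicator 1 ω ∂ν :=
        (integral_indicator_one hmeas).symm
    _ = ∫ ω, (1/2 : ℝ) ^ S.card *
          ∑ t ∈ S.powerset, (∏ i ∈ t, eps (f i)) * chi L t ω ∂ν := by
        exact integral_congr_ae (Filter.Eventually.of_forall key)
    _ = (1/2 : ℝ) ^ S.card * ∑ t ∈ S.powerset, (∏ i ∈ t, eps (f i)) * ∫ ω, chi L t ω ∂ν := by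
        rw [integral_const_mul, integral_finset_sum _ hint]
        congr 1
        exact Finset.sum_congr rfl fun t _ => integral_const_mul _ _

lemma chi_empty : chi L (∅ : Finset ι) = fun _ => 1 := by
  funext ω; simp [chi, eps_zero]

include hL in
lemma van [IsProbabilityMeasure ν] (hcyl : ∀ S f, ν (cylSet L S f) = 2⁻¹ ^ S.card) :
    ∀ t : Finset ι, t ≠ ∅ → ∫ ω, chi L t ω ∂ν = 0 := by
  classical
  intro t
  induction t using Finset.strongInduction with
  | _ t IH =>
    intro ht
    have h0 := inv L hL (ν := ν) t (fun _ => 0)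
    rw [hcyl] at h0
    have hlhs : ((2⁻¹ : ℝ≥0∞) ^ t.card).toReal = (1/2 : ℝ) ^ t.card := by
      rw [ENNReal.toReal_pow]; norm_num
    rw [hlhs] at h0
    simp only [eps_zero, Finset.prod_const_one, one_mul] at h0
    have h2 : ((1 : ℝ)/2) ^ t.card ≠ 0 := by positivity
    have hsum : ∑ u ∈ t.powerset, ∫ ω, chi L u ω ∂ν = 1 := by
      have := h0
      nth_rewrite 1 [show ((1:ℝ)/2) ^ t.card = ((1:ℝ)/2) ^ t.card * 1 by ring] at this
      exact (mul_left_cancel₀ h2 this).symm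
    have hmemE : (∅ : Finset ι) ∈ t.powerset := Finset.empty_mem_powerset t
    have hmemt : t ∈ t.powerset.erase ∅ :=
      Finset.mem_erase.mpr ⟨ht, Finset.mem_powerset_self t⟩
    have hzero : ∀ u ∈ (t.powerset.erase ∅).erase t, ∫ ω, chi L u ω ∂ν = 0 := by
      intro u hu
      have hu1 := Finset.mem_erase.mp hu
      have hu2 := Finset.mem_erase.mp hu1.2
      exact IH u (Finset.ssubset_iff_subset_ne.mpr
        ⟨Finset.mem_powerset.mp hu2.2, hu1.1⟩) hu2.1
    rw [← Finset.add_sum_erase _ _ hmemE, ← Finset.add_sum_erase _ _ hmemt,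
      Finset.sum_eq_zero hzero] at hsum
    have h1 : ∫ ω, chi L (∅ : Finset ι) ω ∂ν = 1 := by
      rw [chi_empty]; simp
    rw [h1] at hsum
    linarith

include hL in
lemma extG {ν ν' : Measure α} [IsProbabilityMeasure ν] [IsProbabilityMeasure ν']
    (hgen : (inferInstance : MeasurableSpace α) =
      ⨆ i, MeasurableSpace.comap (L i) inferInstance)
    (h : ∀ t : Finset ι, ∫ ω, chi L t ω ∂ν = ∫ ω, chi L t ω ∂ν') : ν = ν' := by
  classical
  set C : Set (Set α) := {A | ∃ S f, A = cylSet L S f} with hC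
  have hgenC : (inferInstance : MeasurableSpace α) = MeasurableSpace.generateFrom C := by
    refine le_antisymm ?_ (MeasurableSpace.generateFrom_le ?_)
    · rw [hgen]
      refine iSup_le fun i => ?_
      intro s hs
      obtain ⟨T, -, rfl⟩ := MeasurableSpace.measurableSet_comap.mp hs
      have hT : L i ⁻¹' T = ⋃ b ∈ T, L i ⁻¹' {b} := by ext ω; simp
      rw [hT]
      refine MeasurableSet.biUnion T.to_countable fun b _ => ?_
      refine MeasurableSpace.measurableSet_generateFrom ?_
      exact ⟨{i}, fun _ => b, by ext ω; simp [cylSet]⟩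
    · rintro A ⟨S, f, rfl⟩; exact measurableSet_cyl L hL S f
  refine ext_of_generate_finite C hgenC ?_ ?_ ?_
  · rintro A ⟨S, f, rfl⟩ B ⟨S', f', rfl⟩ hne
    obtain ⟨ω₀, hω₀⟩ := hne
    refine ⟨S ∪ S', fun i => if i ∈ S then f i else f' i, ?_⟩
    ext ω
    simp only [Set.mem_inter_iff, cylSet, Set.mem_setOf_eq, Finset.mem_union]
    constructor
    · rintro ⟨h1, h2⟩ i hi
      by_cases hiS : i ∈ S
      · simp only [if_pos hiS]; exact h1 i hiS
      · simp only [if_neg hiS]; exact h2 i (hi.resolve_left hiS)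
    · intro hh
      constructor
      · intro i hi
        have := hh i (Or.inl hi); rwa [if_pos hi] at this
      · intro i hi
        have := hh i (Or.inr hi)
        by_cases hiS : i ∈ S
        · rw [if_pos hiS] at this
          have e1 := hω₀.1 i hiS
          have e2 := hω₀.2 i hi
          rw [this, ← e1, e2]
        · rwa [if_neg hiS] at this
  · rintro A ⟨S, f, rfl⟩
    have h1 := inv L hL (ν := ν) S f
    have h2 := inv L hL (ν := ν') S f
    have heq : (ν (cylSet L S f)).toReal = (ν' (cylSet L S f)).toReal := by
      rw [h1, h2]
      congr 1
      exact Finset.sum_congr rfl fun t _ => by rw [h t]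
    exact (ENNReal.toReal_eq_toReal_iff' (measure_ne_top ν _) (measure_ne_top ν' _)).mp heq
  · simp

end Generic

/-! ### Instantiation -/

abbrev XS := ℕ → ZMod 2
abbrev Om (n : ℕ) := Fin n → XS

def LX : ℕ → XS → ZMod 2 := fun i x => x i
def LO (n : ℕ) : Fin n × ℕ → Om n → ZMod 2 := fun p ω => ω p.1 p.2

lemma hLX : ∀ i, Measurable (LX i) := fun i => measurable_pi_apply i

lemma hLO (n : ℕ) : ∀ p, Measurable (LO n p) :=
  fun p => (measurable_pi_apply p.2).comp (measurable_pi_apply p.1)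

lemma hgenX : (inferInstance : MeasurableSpace XS) =
    ⨆ i, MeasurableSpace.comap (LX i) inferInstance := rfl

lemma hgenO (n : ℕ) : (inferInstance : MeasurableSpace (Om n)) =
    ⨆ p : Fin n × ℕ, MeasurableSpace.comap (LO n p) inferInstance := by
  rw [iSup_prod]
  have h1 : (inferInstance : MeasurableSpace (Om n)) =
      ⨆ j : Fin n, MeasurableSpace.comap (fun ω : Om n => ω j)
        (⨆ i : ℕ, MeasurableSpace.comap (fun x : XS => x i) inferInstance) := rfl
  rw [h1]
  refine iSup_congr fun j => ?_
  rw [MeasurableSpace.comap_iSup]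
  refine iSup_congr fun i => ?_
  rw [MeasurableSpace.comap_comp]
  rfl

noncomputable def chiA (n : ℕ) (S : Finset ℕ) (a : Fin n → ℕ → ZMod 2) : Om n → ℝ :=
  fun ω => eps (∑ i ∈ S, ∑ j, a j i * ω j i)

lemma zmod2_mul (a x : ZMod 2) : a * x = if a = 1 then x else 0 := by
  rcases zmod2_cases a with h | h <;> subst h <;> simp

lemma sum_pattern (n : ℕ) (S : Finset ℕ) (a : Fin n → ℕ → ZMod 2) (ω : Om n)
    (t : Finset (Fin n × ℕ)) (hT : ∀ p : Fin n × ℕ, p ∈ t ↔ p.2 ∈ S ∧ a p.1 p.2 = 1) :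
    ∑ i ∈ S, ∑ j, a j i * ω j i = ∑ p ∈ t, ω p.1 p.2 := by
  classical
  have h1 : ∑ i ∈ S, ∑ j, a j i * ω j i
      = ∑ q ∈ S ×ˢ (Finset.univ : Finset (Fin n)), a q.2 q.1 * ω q.2 q.1 := by
    rw [Finset.sum_product]
  rw [h1]
  have h2 : ∀ q ∈ S ×ˢ (Finset.univ : Finset (Fin n)),
      a q.2 q.1 * ω q.2 q.1 = if a q.2 q.1 = 1 then ω q.2 q.1 else 0 :=
    fun q _ => zmod2_mul _ _
  rw [Finset.sum_congr rfl h2, ← Finset.sum_filter]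
  refine Finset.sum_bij' (fun q _ => (q.2, q.1)) (fun p _ => (p.2, p.1)) ?_ ?_ ?_ ?_ ?_
  · intro q hq
    simp only [Finset.mem_filter, Finset.mem_product] at hq
    exact (hT _).mpr ⟨hq.1.1, hq.2⟩
  · intro p hp
    have := (hT _).mp hp
    simp only [Finset.mem_filter, Finset.mem_product, Finset.mem_univ, and_true]
    exact ⟨this.1, this.2⟩
  · intro q _; rfl
  · intro p _; rfl
  · intro q _; rfl

def Ta (n : ℕ) (S : Finset ℕ) (a : Fin n → ℕ → ZMod 2) : Finset (Fin n × ℕ) :=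
  ((Finset.univ : Finset (Fin n)) ×ˢ S).filter fun p => a p.1 p.2 = 1

lemma chiA_eq_chi (n : ℕ) (S : Finset ℕ) (a : Fin n → ℕ → ZMod 2) :
    chiA n S a = chi (LO n) (Ta n S a) := by
  funext ω
  unfold chiA chi LO
  congr 1
  refine sum_pattern n S a ω _ fun p => ?_
  simp only [Ta, Finset.mem_filter, Finset.mem_product, Finset.mem_univ, true_and]

lemma chi_eq_chiA (n : ℕ) (t : Finset (Fin n × ℕ)) :
    chi (LO n) t = chiA n (t.image Prod.snd) (fun j i => if (j, i) ∈ t then 1 else 0) := by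
  classical
  funext ω
  unfold chiA chi LO
  congr 1
  refine (sum_pattern n _ _ ω t fun p => ?_).symm
  constructor
  · intro hp
    refine ⟨Finset.mem_image_of_mem _ hp, ?_⟩
    simp only [Prod.mk.eta]
    rw [if_pos hp]
  · rintro ⟨-, hval⟩
    simp only [Prod.mk.eta] at hval
    by_contra hp
    rw [if_neg hp] at hval
    exact (by decide : (0 : ZMod 2) ≠ 1) hval

lemma measurable_chiA (n : ℕ) (S : Finset ℕ) (a : Fin n → ℕ → ZMod 2) :
    Measurable (chiA n S a) := by
  rw [chiA_eq_chi]; exact measurable_chi _ (hLO n) _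

lemma integrable_chiA (n : ℕ) (ν : Measure (Om n)) [IsFiniteMeasure ν]
    (S : Finset ℕ) (a : Fin n → ℕ → ZMod 2) : Integrable (chiA n S a) ν := by
  rw [chiA_eq_chi]; exact integrable_chi _ (hLO n) ν _

noncomputable def coefA (n : ℕ) (ν : Measure (Om n)) (S : Finset ℕ)
    (a : Fin n → ℕ → ZMod 2) : ℝ := ∫ ω, chiA n S a ω ∂ν

lemma extO (n : ℕ) {ν ν' : Measure (Om n)} [IsProbabilityMeasure ν] [IsProbabilityMeasure ν']
    (h : ∀ S a, coefA n ν S a = coefA n ν' S a) : ν = ν' := by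
  refine extG (LO n) (hLO n) (hgenO n) fun t => ?_
  rw [chi_eq_chiA]
  exact h _ _

lemma chiA_congr {n : ℕ} {S : Finset ℕ} {a b : Fin n → ℕ → ZMod 2}
    (h : ∀ i ∈ S, ∀ j, a j i = b j i) : chiA n S a = chiA n S b := by
  funext ω
  unfold chiA
  congr 1
  exact Finset.sum_congr rfl fun i hi => Finset.sum_congr rfl fun j _ => by rw [h i hi j]

lemma chiA_extend {n : ℕ} {S S' : Finset ℕ} {a : Fin n → ℕ → ZMod 2}
    (h : S ⊆ S') (h0 : ∀ i ∈ S', i ∉ S → ∀ j, a j i = 0) : chiA n S' a = chiA n S a := by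
  funext ω
  unfold chiA
  congr 1
  refine (Finset.sum_subset h fun i hi his => ?_).symm
  refine Finset.sum_eq_zero fun j _ => ?_
  rw [h0 i hi his j, zero_mul]

lemma chiA_mul {n : ℕ} (S : Finset ℕ) (a b : Fin n → ℕ → ZMod 2) (ω : Om n) :
    chiA n S a ω * chiA n S b ω = chiA n S (fun j i => a j i + b j i) ω := by
  unfold chiA
  rw [← eps_add]
  congr 1
  rw [← Finset.sum_add_distrib]
  refine Finset.sum_congr rfl fun i _ => ?_
  rw [← Finset.sum_add_distrib]
  exact Finset.sum_congr rfl fun j _ => by ring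

section WithMu

variable (μ : Measure XS) [IsProbabilityMeasure μ]

lemma extX {ρ ρ' : Measure XS} [IsProbabilityMeasure ρ] [IsProbabilityMeasure ρ']
    (h : ∀ t : Finset ℕ, ∫ x, chi LX t x ∂ρ = ∫ x, chi LX t x ∂ρ') : ρ = ρ' :=
  extG LX hLX hgenX h

variable (hHaar : ∀ (s : Finset ℕ) (f : ℕ → ZMod 2),
  μ {x | ∀ i ∈ s, x i = f i} = (2 : ℝ≥0∞)⁻¹ ^ s.card)

include hHaar in
lemma mu_cyl (S : Finset ℕ) (f : ℕ → ZMod 2) : μ (cylSet LX S f) = 2⁻¹ ^ S.card :=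
  hHaar S f

include hHaar in
lemma coefX_mu (t : Finset ℕ) (ht : t ≠ ∅) : ∫ x, chi LX t x ∂μ = 0 :=
  van LX hLX (mu_cyl μ hHaar) t ht

include hHaar in
lemma pi_cyl (n : ℕ) (s : Finset (Fin n × ℕ)) (f : Fin n × ℕ → ZMod 2) :
    (Measure.pi fun _ : Fin n => μ) (cylSet (LO n) s f) = 2⁻¹ ^ s.card := by
  classical
  have hset : cylSet (LO n) s f = Set.univ.pi (fun j : Fin n =>
      {x : XS | ∀ i ∈ (s.filter fun p => p.1 = j).image Prod.snd, x i = f (j, i)}) := by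
    ext ω
    simp only [cylSet, Set.mem_setOf_eq, Set.mem_pi, Set.mem_univ, forall_true_left,
      Finset.mem_image, Finset.mem_filter, LO]
    constructor
    · rintro h j i ⟨p, ⟨hp, hp1⟩, hp2⟩
      obtain ⟨p1, p2⟩ := p
      dsimp at hp1 hp2
      subst hp1; subst hp2
      exact h _ hp
    · intro h p hp
      obtain ⟨p1, p2⟩ := p
      exact h p1 p2 ⟨(p1, p2), ⟨hp, rfl⟩, rfl⟩
  rw [hset, Measure.pi_pi]
  have hval : ∀ j : Fin n,
      μ {x : XS | ∀ i ∈ (s.filter fun p => p.1 = j).image Prod.snd, x i = f (j, i)} =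
        2⁻¹ ^ ((s.filter fun p => p.1 = j).image Prod.snd).card :=
    fun j => hHaar _ _
  rw [Finset.prod_congr rfl fun j _ => hval j, Finset.prod_pow_eq_pow_sum]
  congr 1
  have hcards : ∀ j : Fin n, ((s.filter fun p => p.1 = j).image Prod.snd).card =
      (s.filter fun p => p.1 = j).card := by
    intro j
    refine Finset.card_image_of_injOn fun p hp q hq hpq => ?_
    have hp1 := (Finset.mem_filter.mp hp).2
    have hq1 := (Finset.mem_filter.mp hq).2
    exact Prod.ext (hp1.trans hq1.symm) hpq
  rw [Finset.sum_congr rfl fun j _ => hcards j]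
  exact (Finset.card_eq_sum_card_fiberwise fun p _ => Finset.mem_univ p.1).symm

include hHaar in
lemma coefA_pi (n : ℕ) (S : Finset ℕ) (a : Fin n → ℕ → ZMod 2) :
    coefA n (Measure.pi fun _ : Fin n => μ) S a =
      if ∀ i ∈ S, ∀ j, a j i = 0 then 1 else 0 := by
  classical
  split_ifs with hz
  · have hone : chiA n S a = fun _ => 1 := by
      funext ω
      unfold chiA
      have h0 : ∑ i ∈ S, ∑ j, a j i * ω j i = 0 :=
        Finset.sum_eq_zero fun i hi => Finset.sum_eq_zero fun j _ => by
          rw [hz i hi j, zero_mul]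
      rw [h0, eps_zero]
    unfold coefA
    rw [hone]
    simp
  · push_neg at hz
    obtain ⟨i₀, hi₀, j₀, hj₀⟩ := hz
    unfold coefA
    rw [chiA_eq_chi]
    refine van (LO n) (hLO n) (pi_cyl μ hHaar n) _ ?_
    have hmem : (j₀, i₀) ∈ Ta n S a := by
      simp only [Ta, Finset.mem_filter, Finset.mem_product, Finset.mem_univ, true_and]
      exact ⟨hi₀, (zmod2_cases _).resolve_left hj₀⟩
    exact Finset.ne_empty_of_mem hmem

lemma zmod2_add_self (x : ZMod 2) : x + x = 0 := by revert x; decide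

lemma eps_one : eps 1 = -1 := by
  rw [eps, if_neg (by decide : (1 : ZMod 2) ≠ 0)]

lemma coef_zero_of_odd_row {n : ℕ} {ν : Measure (Om n)} [IsProbabilityMeasure ν]
    (h3 : ∀ α : XS, Measure.map (fun ω : Om n => fun j => ω j + α) ν = ν)
    {S : Finset ℕ} {a : Fin n → ℕ → ZMod 2} {i₀ : ℕ} (hi₀ : i₀ ∈ S)
    (hodd : ∑ j, a j i₀ = 1) : coefA n ν S a = 0 := by
  classical
  set α : XS := fun i => if i = i₀ then 1 else 0 with hα
  have hmeasD : Measurable (fun ω : Om n => fun j => ω j + α) := by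
    refine measurable_pi_iff.mpr fun j => ?_
    refine measurable_pi_iff.mpr fun i => ?_
    exact measurable_add_zmod
      ((measurable_pi_apply i).comp (measurable_pi_apply j)) measurable_const
  have hpt : ∀ ω : Om n,
      chiA n S a ((fun ω : Om n => fun j => ω j + α) ω) = - chiA n S a ω := by
    intro ω
    unfold chiA
    simp only [Pi.add_apply]
    have hper : ∀ i, (∑ j, a j i * (ω j i + α i))
        = (∑ j, a j i * ω j i) + (∑ j, a j i) * α i := by
      intro i
      rw [Finset.sum_mul, ← Finset.sum_add_distrib]
      exact Finset.sum_congr rfl fun j _ => mul_add _ _ _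
    rw [Finset.sum_congr rfl fun i _ => hper i, Finset.sum_add_distrib]
    have hsec : ∑ i ∈ S, (∑ j, a j i) * α i = 1 := by
      simp only [hα, mul_ite, mul_one, mul_zero]
      rw [Finset.sum_ite_eq' S i₀ (fun i => ∑ j, a j i), if_pos hi₀, hodd]
    rw [hsec, eps_add, eps_one]
    ring
  have key : coefA n ν S a = - coefA n ν S a := by
    conv_lhs => rw [coefA, ← h3 α]
    rw [integral_map hmeasD.aemeasurable (measurable_chiA n S a).aestronglyMeasurable]
    rw [integral_congr_ae (Filter.Eventually.of_forall hpt), integral_neg]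
    rfl
  linarith

lemma coef_perm {n : ℕ} {ν : Measure (Om n)} [IsProbabilityMeasure ν]
    (h2 : ∀ σ : Equiv.Perm ℕ,
      Measure.map (fun ω : Om n => fun j => fun i => ω j (σ i)) ν = ν)
    (S : Finset ℕ) (a : Fin n → ℕ → ZMod 2) (σ : Equiv.Perm ℕ) :
    coefA n ν S a = coefA n ν (S.image σ) (fun j i => a j (σ.symm i)) := by
  classical
  have hmeasD : Measurable (fun ω : Om n => fun j => fun i => ω j (σ i)) := by
    refine measurable_pi_iff.mpr fun j => ?_
    refine measurable_pi_iff.mpr fun i => ?_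
    exact (measurable_pi_apply (σ i)).comp (measurable_pi_apply j)
  have hpt : ∀ ω : Om n,
      chiA n S a ((fun ω : Om n => fun j => fun i => ω j (σ i)) ω)
        = chiA n (S.image σ) (fun j i => a j (σ.symm i)) ω := by
    intro ω
    unfold chiA
    congr 1
    rw [Finset.sum_image (fun x _ y _ h => σ.injective h)]
    simp only [Equiv.symm_apply_apply]
  conv_lhs => rw [coefA, ← h2 σ]
  rw [integral_map hmeasD.aemeasurable (measurable_chiA n S a).aestronglyMeasurable]
  rw [integral_congr_ae (Filter.Eventually.of_forall hpt)]
  rfl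

include hHaar in
lemma coef_zero_face (m : ℕ) {ν : Measure (Om (2*m+1))} [IsProbabilityMeasure ν]
    (hface : ∀ e : Fin (2*m) → Fin (2*m+1), Function.Injective e →
      Measure.map (fun (ω : Om (2*m+1)) (k : Fin (2*m)) => ω (e k)) ν
        = Measure.pi fun _ => μ)
    {S : Finset ℕ} {b : Fin (2*m+1) → ℕ → ZMod 2} (j₀ : Fin (2*m+1))
    (h0 : ∀ i ∈ S, b j₀ i = 0)
    (hnz : ∃ i ∈ S, ∃ j, b j i ≠ 0) : coefA (2*m+1) ν S b = 0 := by
  classical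
  have hmeas : Measurable (fun (ω : Om (2*m+1)) (k : Fin (2*m)) => ω (j₀.succAbove k)) :=
    measurable_pi_iff.mpr fun k => measurable_pi_apply _
  have hpt : ∀ ω : Om (2*m+1), chiA (2*m+1) S b ω
      = chiA (2*m) S (fun k i => b (j₀.succAbove k) i)
          ((fun (ω : Om (2*m+1)) (k : Fin (2*m)) => ω (j₀.succAbove k)) ω) := by
    intro ω
    unfold chiA
    congr 1
    refine Finset.sum_congr rfl fun i hi => ?_
    rw [Fin.sum_univ_succAbove (fun j => b j i * ω j i) j₀, h0 i hi, zero_mul, zero_add]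
  have : coefA (2*m+1) ν S b
      = coefA (2*m) (Measure.pi fun _ => μ) S (fun k i => b (j₀.succAbove k) i) := by
    rw [coefA, integral_congr_ae (Filter.Eventually.of_forall hpt),
      ← integral_map hmeas.aemeasurable (measurable_chiA _ _ _).aestronglyMeasurable,
      hface j₀.succAbove Fin.succAbove_right_injective]
    rfl
  rw [this, coefA_pi μ hHaar, if_neg]
  push_neg
  obtain ⟨i₀, hi₀, j₁, hj₁⟩ := hnz
  have hj₁0 : j₁ ≠ j₀ := fun h => hj₁ (h ▸ h0 i₀ hi₀)
  obtain ⟨k, hk⟩ := Fin.exists_succAbove_eq hj₁0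
  exact ⟨i₀, hi₀, k, by rwa [hk]⟩

include hHaar in
lemma coef_zero_main (m : ℕ) {ν : Measure (Om (2*m+1))} [IsProbabilityMeasure ν]
    (h2 : ∀ σ : Equiv.Perm ℕ,
      Measure.map (fun ω : Om (2*m+1) => fun j => fun i => ω j (σ i)) ν = ν)
    (hface : ∀ e : Fin (2*m) → Fin (2*m+1), Function.Injective e →
      Measure.map (fun (ω : Om (2*m+1)) (k : Fin (2*m)) => ω (e k)) ν
        = Measure.pi fun _ => μ)
    (S : Finset ℕ) (a : Fin (2*m+1) → ℕ → ZMod 2)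
    (heven : ∀ i ∈ S, ∑ j, a j i = 0)
    (hnz : ∃ i ∈ S, ∃ j, a j i ≠ 0) : coefA (2*m+1) ν S a = 0 := by
  classical
  obtain ⟨i₀, hi₀, j₁, hj₁⟩ := hnz
  have hRsum : ∑ j, a j i₀ = 0 := heven i₀ hi₀
  have hexj0 : ∃ j₀, a j₀ i₀ = 0 := by
    by_contra hctr
    push_neg at hctr
    have hall : ∀ j, a j i₀ = 1 := fun j => (zmod2_cases (a j i₀)).resolve_left (hctr j)
    rw [Finset.sum_congr rfl fun j _ => hall j, Finset.sum_const, Finset.card_univ,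
      Fintype.card_fin, nsmul_eq_mul, mul_one] at hRsum
    have h2z : ((2*m+1 : ℕ) : ZMod 2) = 1 := by
      push_cast
      rw [show ((2:ZMod 2)) = 0 from by decide]
      ring
    rw [h2z] at hRsum
    exact one_ne_zero hRsum
  obtain ⟨j₀, hj₀⟩ := hexj0
  set c := coefA (2*m+1) ν S a with hc
  suffices hMbound : ∀ M : ℕ, 0 < M → c ^ 2 ≤ 1 / (M : ℝ) by
    by_contra hc0
    have hpos : 0 < c ^ 2 := by positivity
    have h01 : (0:ℝ) < 1 / c ^ 2 := by positivity
    obtain ⟨M, hM⟩ := exists_nat_gt (1 / c ^ 2)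
    have hM0 : 0 < M := Nat.cast_pos.mp (h01.trans hM)
    have hbd := hMbound M hM0
    have hMR : (0:ℝ) < M := by exact_mod_cast hM0
    rw [div_lt_iff₀ hpos] at hM
    rw [le_div_iff₀ hMR] at hbd
    nlinarith
  intro M hM
  set N : ℕ → ℕ := fun t => (S.sup id) + 1 + t with hN
  have hNfresh : ∀ t, N t ∉ S := by
    intro t hmem
    have hle := Finset.le_sup (f := id) hmem
    simp only [id_eq, hN] at hle
    omega
  have hNinj : ∀ t t', N t = N t' → t = t' := by
    intro t t' h
    simp only [hN] at h
    omega
  have hi₀N : ∀ t, i₀ ≠ N t := fun t h => hNfresh t (h ▸ hi₀)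
  set S' : Finset ℕ := S ∪ (Finset.range M).image N with hS'
  have hSS' : S ⊆ S' := Finset.subset_union_left
  set a' : Fin (2*m+1) → ℕ → ZMod 2 := fun j i => if i ∈ S then a j i else 0 with ha'
  set b : ℕ → Fin (2*m+1) → ℕ → ZMod 2 := fun t j i =>
    if i = N t then a j i₀ else if i ∈ S ∧ i ≠ i₀ then a j i else 0 with hb
  have hca' : c = coefA (2*m+1) ν S' a' := by
    rw [hc, coefA, coefA,
      chiA_congr (n := 2*m+1) (S := S) (a := a) (b := a')
        (fun i hi j => by simp only [ha']; rw [if_pos hi]),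
      chiA_extend hSS' (fun i _ hiS j => by simp only [ha']; rw [if_neg hiS])]
  have claim1 : ∀ t ∈ Finset.range M, (∫ ω, chiA (2*m+1) S' (b t) ω ∂ν) = c := by
    intro t ht
    have hNtS' : N t ∈ S' := by
      rw [hS']
      exact Finset.mem_union_right _ (Finset.mem_image_of_mem N ht)
    set σ : Equiv.Perm ℕ := Equiv.swap i₀ (N t) with hσ
    have himg : S'.image σ = S' := by
      have hsub : S'.image σ ⊆ S' := by
        intro x hx
        obtain ⟨y, hy, rfl⟩ := Finset.mem_image.mp hx
        rcases eq_or_ne y i₀ with h | h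
        · subst h; rw [hσ, Equiv.swap_apply_left]; exact hNtS'
        · rcases eq_or_ne y (N t) with h' | h'
          · subst h'; rw [hσ, Equiv.swap_apply_right]; exact hSS' hi₀
          · rw [hσ, Equiv.swap_apply_of_ne_of_ne h h']; exact hy
      exact Finset.eq_of_subset_of_card_le hsub
        (le_of_eq (Finset.card_image_of_injective _ σ.injective).symm)
    have hperm := coef_perm h2 S' a' σ
    rw [himg] at hperm
    have hcongr : chiA (2*m+1) S' (fun j i => a' j (σ.symm i)) = chiA (2*m+1) S' (b t) := by
      refine chiA_congr fun i hi j => ?_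
      rw [Equiv.symm_swap]
      simp only [ha', hb]
      rcases eq_or_ne i (N t) with h | h
      · subst h
        rw [Equiv.swap_apply_right, if_pos hi₀, if_pos rfl]
      · rcases eq_or_ne i i₀ with h' | h'
        · subst h'
          rw [Equiv.swap_apply_left, if_neg (hNfresh t), if_neg (hi₀N t),
            if_neg (by simp)]
        · rw [Equiv.swap_apply_of_ne_of_ne h' h, if_neg h]
          by_cases hiS : i ∈ S
          · rw [if_pos hiS, if_pos ⟨hiS, h'⟩]
          · rw [if_neg hiS, if_neg (by tauto)]
    have : coefA (2*m+1) ν S' (b t) = c := by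
      rw [hca', hperm, coefA, coefA, hcongr]
    exact this
  have claim23 : ∀ t ∈ Finset.range M, ∀ t' ∈ Finset.range M,
      ∫ ω, chiA (2*m+1) S' (b t) ω * chiA (2*m+1) S' (b t') ω ∂ν
        = if t = t' then 1 else 0 := by
    intro t ht t' ht'
    have hrw : (fun ω => chiA (2*m+1) S' (b t) ω * chiA (2*m+1) S' (b t') ω)
        = chiA (2*m+1) S' (fun j i => b t j i + b t' j i) :=
      funext fun ω => chiA_mul S' (b t) (b t') ω
    rw [integral_congr_ae (Filter.Eventually.of_forall fun ω => congrFun hrw ω)]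
    split_ifs with htt
    · subst htt
      have hzero : chiA (2*m+1) S' (fun j i => b t j i + b t j i) = fun _ => 1 := by
        funext ω
        unfold chiA
        rw [Finset.sum_eq_zero fun i _ => Finset.sum_eq_zero fun j _ => by
          simp [zmod2_add_self], eps_zero]
      rw [hzero]
      simp
    · have hne : N t ≠ N t' := fun h => htt (hNinj _ _ h)
      have hne' : N t' ≠ N t := fun h => hne h.symm
      have hb1 : ∀ (tt : ℕ) (j : Fin (2*m+1)), b tt j (N tt) = a j i₀ := fun tt j => by
        simp [hb]
      have hb2 : ∀ j : Fin (2*m+1), b t' j (N t) = 0 := fun j => by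
        simp [hb, hne, hNfresh t]
      have hb2' : ∀ j : Fin (2*m+1), b t j (N t') = 0 := fun j => by
        simp [hb, hne', hNfresh t']
      have hNtS' : N t ∈ S' := by
        rw [hS']
        exact Finset.mem_union_right _ (Finset.mem_image_of_mem N ht)
      refine coef_zero_face μ hHaar m hface j₀ ?_ ?_
      · intro i _
        show b t j₀ i + b t' j₀ i = 0
        rcases eq_or_ne i (N t) with h | h
        · subst h
          rw [hb1, hb2, hj₀, add_zero]
        · rcases eq_or_ne i (N t') with h' | h'
          · subst h'
            rw [hb1, hb2', hj₀, zero_add]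
          · have e1 : b t j₀ i = b t' j₀ i := by
              simp only [hb]
              rw [if_neg h, if_neg h']
            rw [e1]
            exact zmod2_add_self _
      · refine ⟨N t, hNtS', j₁, ?_⟩
        show b t j₁ (N t) + b t' j₁ (N t) ≠ 0
        rw [hb1, hb2, add_zero]
        exact hj₁

  have hint : ∀ t : ℕ, Integrable (chiA (2*m+1) S' (b t)) ν :=
    fun t => integrable_chiA _ ν _ _
  have hintprod : ∀ t t' : ℕ,
      Integrable (fun ω => chiA (2*m+1) S' (b t) ω * chiA (2*m+1) S' (b t') ω) ν := by
    intro t t'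
    have hrw : (fun ω => chiA (2*m+1) S' (b t) ω * chiA (2*m+1) S' (b t') ω)
        = chiA (2*m+1) S' (fun j i => b t j i + b t' j i) :=
      funext fun ω => chiA_mul S' (b t) (b t') ω
    rw [hrw]
    exact integrable_chiA _ ν _ _
  set Z : Om (2*m+1) → ℝ := fun ω => ∑ t ∈ Finset.range M, chiA (2*m+1) S' (b t) ω with hZ
  have hZint : Integrable Z ν := by
    simp only [hZ]
    exact integrable_finset_sum _ fun t _ => hint t
  have hZ1 : ∫ ω, Z ω ∂ν = M * c := by
    simp only [hZ]
    rw [integral_finset_sum _ fun t _ => hint t, Finset.sum_congr rfl claim1,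
      Finset.sum_const, Finset.card_range, nsmul_eq_mul]
  have hprodeq : ∀ ω, Z ω * Z ω = ∑ t ∈ Finset.range M, ∑ t' ∈ Finset.range M,
      chiA (2*m+1) S' (b t) ω * chiA (2*m+1) S' (b t') ω := fun ω => by
    simp only [hZ]
    exact Finset.sum_mul_sum _ _ _ _
  have hZZint : Integrable (fun ω => Z ω * Z ω) ν := by
    rw [show (fun ω => Z ω * Z ω) = fun ω => ∑ t ∈ Finset.range M, ∑ t' ∈ Finset.range M,
      chiA (2*m+1) S' (b t) ω * chiA (2*m+1) S' (b t') ω from funext hprodeq]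
    exact integrable_finset_sum _ fun t _ => integrable_finset_sum _ fun t' _ => hintprod t t'
  have hZ2 : ∫ ω, Z ω * Z ω ∂ν = M := by
    rw [integral_congr_ae (Filter.Eventually.of_forall hprodeq),
      integral_finset_sum _ fun t _ => integrable_finset_sum _ fun t' _ => hintprod t t']
    have hinner : ∀ t ∈ Finset.range M,
        (∫ ω, ∑ t' ∈ Finset.range M,
          chiA (2*m+1) S' (b t) ω * chiA (2*m+1) S' (b t') ω ∂ν) = 1 := by
      intro t ht
      rw [integral_finset_sum _ fun t' _ => hintprod t t',
        Finset.sum_congr rfl fun t' ht' => claim23 t ht t' ht',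
        Finset.sum_ite_eq (Finset.range M) t (fun _ => (1:ℝ)), if_pos ht]
    rw [Finset.sum_congr rfl hinner, Finset.sum_const, Finset.card_range, nsmul_eq_mul, mul_one]
  have hMR : (0:ℝ) < M := by exact_mod_cast hM
  have hnonneg : 0 ≤ ∫ ω, (Z ω - M * c) ^ 2 ∂ν := integral_nonneg fun ω => sq_nonneg _
  have hint1 : Integrable (fun ω => Z ω * Z ω - 2 * ((M:ℝ) * c) * Z ω) ν := by
    exact hZZint.sub (hZint.const_mul _)
  have hexpand : ∫ ω, (Z ω - M * c) ^ 2 ∂ν = M - (M:ℝ) ^ 2 * c ^ 2 := by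
    have hptw : ∀ ω, (Z ω - M * c) ^ 2
        = Z ω * Z ω - 2 * ((M:ℝ) * c) * Z ω + ((M:ℝ) * c) ^ 2 := fun ω => by ring
    rw [integral_congr_ae (Filter.Eventually.of_forall hptw),
      integral_add hint1 (integrable_const _),
      integral_sub hZZint (hZint.const_mul _),
      integral_const_mul, hZ1, hZ2, integral_const, probReal_univ]
    simp only [ENNReal.toReal_one, smul_eq_mul, one_mul]
    ring
  rw [hexpand] at hnonneg
  rw [le_div_iff₀ hMR]
  nlinarith

include hHaar in
theorem partA (m : ℕ) {ν : Measure (Om (2*m+1))} [IsProbabilityMeasure ν]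
    (h2 : ∀ σ : Equiv.Perm ℕ,
      Measure.map (fun ω : Om (2*m+1) => fun j => fun i => ω j (σ i)) ν = ν)
    (h3 : ∀ α : XS, Measure.map (fun ω : Om (2*m+1) => fun j => ω j + α) ν = ν)
    (hface : ∀ e : Fin (2*m) → Fin (2*m+1), Function.Injective e →
      Measure.map (fun (ω : Om (2*m+1)) (k : Fin (2*m)) => ω (e k)) ν
        = Measure.pi fun _ => μ) :
    ν = Measure.pi fun _ => μ := by
  classical
  refine extO (2*m+1) fun S a => ?_
  rw [coefA_pi μ hHaar]
  split_ifs with hz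
  · have hone : chiA (2*m+1) S a = fun _ => 1 := by
      funext ω
      unfold chiA
      rw [Finset.sum_eq_zero fun i hi => Finset.sum_eq_zero fun j _ => by
        rw [hz i hi j, zero_mul], eps_zero]
    rw [coefA, hone]
    simp
  · push_neg at hz
    obtain ⟨i₀, hi₀, j₁, hj₁⟩ := hz
    by_cases hodd : ∃ i ∈ S, ∑ j, a j i = 1
    · obtain ⟨i₁, hi₁, hsum⟩ := hodd
      exact coef_zero_of_odd_row h3 hi₁ hsum
    · push_neg at hodd
      have heven : ∀ i ∈ S, ∑ j, a j i = 0 := fun i hi =>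
        (zmod2_cases _).resolve_right (hodd i hi)
      exact coef_zero_main μ hHaar m h2 hface S a heven ⟨i₀, hi₀, j₁, hj₁⟩

/-! ### Part B : the counterexample -/

def Phi : Om 3 → Om 4 :=
  fun u j => if h : (j : ℕ) < 3 then u ⟨j, h⟩ else u 0 + u 1 + u 2

lemma Phi_lt (u : Om 3) (j : Fin 4) (h : (j : ℕ) < 3) : Phi u j = u ⟨j, h⟩ := dif_pos h

lemma Phi_zero (u : Om 3) : Phi u 0 = u 0 := by
  rw [Phi_lt u 0 (by norm_num)]
  congr 1

lemma Phi_one (u : Om 3) : Phi u 1 = u 1 := by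
  rw [Phi_lt u 1 (by norm_num)]
  congr 1

lemma Phi_two (u : Om 3) : Phi u 2 = u 2 := by
  rw [Phi_lt u 2 (by norm_num)]
  congr 1

lemma Phi_three (u : Om 3) : Phi u 3 = u 0 + u 1 + u 2 := dif_neg (by decide)

lemma measurable_Phi : Measurable Phi := by
  refine measurable_pi_iff.mpr fun j => ?_
  by_cases h : (j : ℕ) < 3
  · simp only [Phi, dif_pos h]
    exact measurable_pi_apply _
  · simp only [Phi, dif_neg h]
    refine measurable_pi_iff.mpr fun i => ?_
    simp only [Pi.add_apply]
    exact measurable_add_zmod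
      (measurable_add_zmod ((measurable_pi_apply i).comp (measurable_pi_apply 0))
        ((measurable_pi_apply i).comp (measurable_pi_apply 1)))
      ((measurable_pi_apply i).comp (measurable_pi_apply 2))

noncomputable def nu4 : Measure (Om 4) := Measure.map Phi (Measure.pi fun _ : Fin 3 => μ)

instance : IsProbabilityMeasure (nu4 μ) :=
  Measure.isProbabilityMeasure_map measurable_Phi.aemeasurable

lemma zmod2_add_eq_zero_iff (x y : ZMod 2) : x + y = 0 ↔ x = y := by revert x y; decide

lemma fin4_cases (j : Fin 4) : j = 3 ∨ ∃ k : Fin 3, j = k.castSucc := by revert j; decide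

set_option maxHeartbeats 1000000 in
include hHaar in
lemma coef_nu4 (S : Finset ℕ) (a : Fin 4 → ℕ → ZMod 2) :
    coefA 4 (nu4 μ) S a = if (∀ i ∈ S, ∀ j : Fin 4, a j i = a 3 i) then 1 else 0 := by
  classical
  have hmap : coefA 4 (nu4 μ) S a
      = coefA 3 (Measure.pi fun _ : Fin 3 => μ) S
          (fun k i => a k.castSucc i + a 3 i) := by
    rw [coefA, nu4,
      integral_map measurable_Phi.aemeasurable (measurable_chiA _ _ _).aestronglyMeasurable]
    refine integral_congr_ae (Filter.Eventually.of_forall fun u => ?_)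
    unfold chiA
    refine congrArg eps ?_
    refine Finset.sum_congr rfl fun i _ => ?_
    rw [Fin.sum_univ_four, Fin.sum_univ_three, Phi_zero u, Phi_one u, Phi_two u, Phi_three u]
    simp only [Pi.add_apply,
      show Fin.castSucc (0 : Fin 3) = (0 : Fin 4) from by decide,
      show Fin.castSucc (1 : Fin 3) = (1 : Fin 4) from by decide,
      show Fin.castSucc (2 : Fin 3) = (2 : Fin 4) from by decide]
    ring
  rw [hmap, coefA_pi μ hHaar]
  refine if_congr ?_ rfl rfl
  constructor
  · intro h i hi j
    rcases fin4_cases j with rfl | ⟨k, rfl⟩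
    · rfl
    · exact (zmod2_add_eq_zero_iff _ _).mp (h i hi k)
  · intro h i hi k
    rw [zmod2_add_eq_zero_iff]
    exact h i hi k.castSucc

lemma measurable_diag_perm (n : ℕ) (σ : Equiv.Perm ℕ) :
    Measurable (fun ω : Om n => fun j => fun i => ω j (σ i)) := by
  refine measurable_pi_iff.mpr fun j => ?_
  refine measurable_pi_iff.mpr fun i => ?_
  exact (measurable_pi_apply (σ i)).comp (measurable_pi_apply j)

lemma measurable_diag_trans (n : ℕ) (α : XS) :
    Measurable (fun ω : Om n => fun j => ω j + α) := by
  refine measurable_pi_iff.mpr fun j => ?_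
  refine measurable_pi_iff.mpr fun i => ?_
  exact measurable_add_zmod
    ((measurable_pi_apply i).comp (measurable_pi_apply j)) measurable_const

lemma coefA_map_perm {n : ℕ} (ρ : Measure (Om n)) [IsProbabilityMeasure ρ]
    (σ : Equiv.Perm ℕ) (S : Finset ℕ) (a : Fin n → ℕ → ZMod 2) :
    coefA n (Measure.map (fun ω : Om n => fun j => fun i => ω j (σ i)) ρ) S a
      = coefA n ρ (S.image σ) (fun j i => a j (σ.symm i)) := by
  classical
  rw [coefA,
    integral_map (measurable_diag_perm n σ).aemeasurable
      (measurable_chiA n S a).aestronglyMeasurable]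
  refine integral_congr_ae (Filter.Eventually.of_forall fun ω => ?_)
  unfold chiA
  congr 1
  rw [Finset.sum_image (fun x _ y _ h => σ.injective h)]
  simp only [Equiv.symm_apply_apply]

lemma coefA_map_trans {n : ℕ} (ρ : Measure (Om n)) [IsProbabilityMeasure ρ]
    (α : XS) (S : Finset ℕ) (a : Fin n → ℕ → ZMod 2) :
    coefA n (Measure.map (fun ω : Om n => fun j => ω j + α) ρ) S a
      = eps (∑ i ∈ S, (∑ j, a j i) * α i) * coefA n ρ S a := by
  classical
  rw [coefA,
    integral_map (measurable_diag_trans n α).aemeasurable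
      (measurable_chiA n S a).aestronglyMeasurable]
  have hpt : ∀ ω : Om n, chiA n S a ((fun ω : Om n => fun j => ω j + α) ω)
      = eps (∑ i ∈ S, (∑ j, a j i) * α i) * chiA n S a ω := by
    intro ω
    unfold chiA
    simp only [Pi.add_apply]
    have hper : ∀ i, (∑ j, a j i * (ω j i + α i))
        = (∑ j, a j i * ω j i) + (∑ j, a j i) * α i := by
      intro i
      rw [Finset.sum_mul, ← Finset.sum_add_distrib]
      exact Finset.sum_congr rfl fun j _ => mul_add _ _ _
    rw [Finset.sum_congr rfl fun i _ => hper i, Finset.sum_add_distrib, eps_add, mul_comm]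
  rw [integral_congr_ae (Filter.Eventually.of_forall hpt), integral_const_mul]
  rfl

include hHaar in
lemma nu4_proj (j : Fin 4) : Measure.map (fun x : Om 4 => x j) (nu4 μ) = μ := by
  classical
  haveI : IsProbabilityMeasure (Measure.map (fun x : Om 4 => x j) (nu4 μ)) :=
    Measure.isProbabilityMeasure_map (measurable_pi_apply j).aemeasurable
  refine extX fun t => ?_
  rw [integral_map (measurable_pi_apply j).aemeasurable
    (measurable_chi LX hLX t).aestronglyMeasurable]
  have hchi : ∀ ω : Om 4, chi LX t (ω j)
      = chiA 4 t (fun j' i => if j' = j then 1 else 0) ω := by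
    intro ω
    unfold chi chiA LX
    congr 1
    refine Finset.sum_congr rfl fun i _ => ?_
    simp only [ite_mul, one_mul, zero_mul]
    rw [Finset.sum_ite_eq' Finset.univ j fun j' => ω j' i, if_pos (Finset.mem_univ j)]
  rw [integral_congr_ae (Filter.Eventually.of_forall hchi)]
  rw [show (∫ ω, chiA 4 t (fun j' i => if j' = j then 1 else 0) ω ∂(nu4 μ))
    = coefA 4 (nu4 μ) t (fun j' i => if j' = j then 1 else 0) from rfl]
  rw [coef_nu4 μ hHaar]
  rcases eq_or_ne t ∅ with rfl | ht
  · rw [if_pos (fun i hi => absurd hi (Finset.notMem_empty i)), chi_empty]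
    simp
  · rw [coefX_mu μ hHaar t ht, if_neg ?_]
    obtain ⟨i, hi⟩ := Finset.nonempty_iff_ne_empty.mpr ht
    intro hcond
    by_cases hj : j = (3 : Fin 4)
    · subst hj
      have h0 := hcond i hi 0
      rw [if_neg (by decide), if_pos rfl] at h0
      exact (by decide : (0 : ZMod 2) ≠ 1) h0
    · have h0 := hcond i hi j
      rw [if_pos rfl, if_neg (fun hh => hj hh.symm)] at h0
      exact (by decide : (1 : ZMod 2) ≠ 0) h0

include hHaar in
lemma nu4_inv (g : XS → XS)
    (hg : (∃ σ : Equiv.Perm ℕ, g = fun x i => x (σ i)) ∨ (∃ α : XS, g = fun x => x + α)) :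
    Measure.map (fun x : Om 4 => fun i => g (x i)) (nu4 μ) = nu4 μ := by
  classical
  rcases hg with ⟨σ, rfl⟩ | ⟨α, rfl⟩
  · show Measure.map (fun (ω : Om 4) (j : Fin 4) (i : ℕ) => ω j (σ i)) (nu4 μ) = nu4 μ
    haveI : IsProbabilityMeasure
        (Measure.map (fun (ω : Om 4) (j : Fin 4) (i : ℕ) => ω j (σ i)) (nu4 μ)) :=
      Measure.isProbabilityMeasure_map (measurable_diag_perm 4 σ).aemeasurable
    refine extO 4 fun S a => ?_
    rw [coefA_map_perm, coef_nu4 μ hHaar, coef_nu4 μ hHaar]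
    refine if_congr ?_ rfl rfl
    constructor
    · intro h i hi j
      have hh := h (σ i) (Finset.mem_image_of_mem σ hi) j
      simpa using hh
    · intro h i' hi' j
      obtain ⟨i, hi, rfl⟩ := Finset.mem_image.mp hi'
      simpa using h i hi j
  · show Measure.map (fun (ω : Om 4) (j : Fin 4) => ω j + α) (nu4 μ) = nu4 μ
    haveI : IsProbabilityMeasure
        (Measure.map (fun (ω : Om 4) (j : Fin 4) => ω j + α) (nu4 μ)) :=
      Measure.isProbabilityMeasure_map (measurable_diag_trans 4 α).aemeasurable
    refine extO 4 fun S a => ?_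
    rw [coefA_map_trans, coef_nu4 μ hHaar]
    split_ifs with hcond
    · have hθ : ∑ i ∈ S, (∑ j, a j i) * α i = 0 := by
        refine Finset.sum_eq_zero fun i hi => ?_
        have h4 : ∀ x : ZMod 2, x + x + x + x = 0 := by decide
        have hrow : ∑ j : Fin 4, a j i = 0 := by
          rw [Fin.sum_univ_four, hcond i hi 0, hcond i hi 1, hcond i hi 2]
          exact h4 _
        rw [hrow, zero_mul]
      rw [hθ, eps_zero, one_mul]
    · rw [mul_zero]

include hHaar in
lemma nu4_face (r : ℕ) (hr : r < 4) (e : Fin r → Fin 4) (he : Function.Injective e) :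
    Measure.map (fun (ω : Om 4) (k : Fin r) => ω (e k)) (nu4 μ)
      = Measure.pi fun _ => μ := by
  classical
  obtain ⟨j₀, hj₀⟩ : ∃ j₀ : Fin 4, ∀ k, e k ≠ j₀ := by
    by_contra hctr
    push_neg at hctr
    have hsurj : Function.Surjective e := fun j => by
      obtain ⟨k, hk⟩ := hctr j
      exact ⟨k, hk⟩
    have hcard := Fintype.card_le_of_surjective e hsurj
    simp only [Fintype.card_fin] at hcard
    omega
  have hmeas : Measurable (fun (ω : Om 4) (k : Fin r) => ω (e k)) :=
    measurable_pi_iff.mpr fun k => measurable_pi_apply _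
  haveI : IsProbabilityMeasure
      (Measure.map (fun (ω : Om 4) (k : Fin r) => ω (e k)) (nu4 μ)) :=
    Measure.isProbabilityMeasure_map hmeas.aemeasurable
  refine extO r fun S b => ?_
  rw [coefA_pi μ hHaar]
  have hpt : ∀ ω : Om 4, chiA r S b ((fun (ω : Om 4) (k : Fin r) => ω (e k)) ω)
      = chiA 4 S (fun j i => ∑ k, if e k = j then b k i else 0) ω := by
    intro ω
    unfold chiA
    congr 1
    refine Finset.sum_congr rfl fun i _ => ?_
    have hrhs : ∀ j : Fin 4, (∑ k, if e k = j then b k i else 0) * ω j i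
        = ∑ k, if e k = j then b k i * ω j i else 0 := fun j => by
      rw [Finset.sum_mul]
      exact Finset.sum_congr rfl fun k _ => by rw [ite_mul, zero_mul]
    rw [Finset.sum_congr rfl fun j _ => hrhs j, Finset.sum_comm]
    refine Finset.sum_congr rfl fun k _ => ?_
    rw [Finset.sum_ite_eq Finset.univ (e k) fun j => b k i * ω j i,
      if_pos (Finset.mem_univ _)]
  rw [coefA, integral_map hmeas.aemeasurable (measurable_chiA _ _ _).aestronglyMeasurable,
    integral_congr_ae (Filter.Eventually.of_forall hpt)]
  rw [show (∫ ω, chiA 4 S (fun j i => ∑ k, if e k = j then b k i else 0) ω ∂(nu4 μ))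
    = coefA 4 (nu4 μ) S (fun j i => ∑ k, if e k = j then b k i else 0) from rfl]
  rw [coef_nu4 μ hHaar]
  refine if_congr ?_ rfl rfl
  have hA0 : ∀ i : ℕ, (∑ k, if e k = j₀ then b k i else 0) = 0 :=
    fun i => Finset.sum_eq_zero fun k' _ => if_neg (hj₀ k')
  have hAe : ∀ (k : Fin r) (i : ℕ), (∑ k', if e k' = e k then b k' i else 0) = b k i := by
    intro k i
    simp only [he.eq_iff]
    rw [Finset.sum_ite_eq' Finset.univ k fun k' => b k' i, if_pos (Finset.mem_univ k)]
  constructor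
  · intro h i hi k
    have h1 := h i hi (e k)
    have h2 := h i hi j₀
    rw [hAe k i] at h1
    rw [hA0 i] at h2
    rw [h1, ← h2]
  · intro h i hi j
    have hzz : ∀ j' : Fin 4, (∑ k, if e k = j' then b k i else 0) = 0 := fun j' =>
      Finset.sum_eq_zero fun k _ => by rw [h i hi k, ite_self]
    rw [hzz j, hzz 3]

include hHaar in
lemma nu4_ne : nu4 μ ≠ Measure.pi fun _ : Fin 4 => μ := by
  intro h
  have h1 := coef_nu4 μ hHaar {0} (fun _ _ => 1)
  rw [h, coefA_pi μ hHaar] at h1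
  have hc1 : ¬ (∀ i ∈ ({0} : Finset ℕ), ∀ j : Fin 4,
      (fun (_ : Fin 4) (_ : ℕ) => (1:ZMod 2)) j i = 0) := fun hc =>
    (by decide : (1:ZMod 2) ≠ 0) (hc 0 (Finset.mem_singleton_self 0) 0)
  have hc2 : ∀ i ∈ ({0} : Finset ℕ), ∀ j : Fin 4,
      (fun (_ : Fin 4) (_ : ℕ) => (1:ZMod 2)) j i
        = (fun (_ : Fin 4) (_ : ℕ) => (1:ZMod 2)) 3 i := fun i _ j => rfl
  rw [if_pos hc2, if_neg hc1] at h1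
  exact one_ne_zero h1.symm

end WithMu

end PsiProof

end PsiAux

/-- The action `Ψ` generated by all coordinate permutations `T_σ` and all
translations `S_α` of `X = (ℤ/2)^ℕ` with Haar measure belongs to `S(2m, 2m+1)` for every
`m ≥ 1`, but does not possess the JR-property; in fact `Ψ ∉ S(3,4)`. -/
theorem psi_odd_JR_but_not_JR
    (μ : Measure (ℕ → ZMod 2)) [IsProbabilityMeasure μ]
    (hHaar : ∀ (s : Finset ℕ) (f : ℕ → ZMod 2),
      μ {x | ∀ i ∈ s, x i = f i} = (2 : ℝ≥0∞)⁻¹ ^ s.card) :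
    (∀ m : ℕ, 1 ≤ m → InSPsi μ (2 * m) (2 * m + 1)) ∧
    ¬ InSPsi μ 3 4 ∧
    ¬ (∀ n : ℕ, 2 < n → InSPsi μ 2 n) := by
  classical
  have hnot : ∀ r : ℕ, r < 4 → ¬ InSPsi μ r 4 := by
    intro r hr hIn
    refine PsiProof.nu4_ne μ hHaar ?_
    refine hIn (PsiProof.nu4 μ) (fun i => PsiProof.nu4_proj μ hHaar i) ?_ ?_
    · intro g hg
      refine PsiProof.nu4_inv μ hHaar g ?_
      rcases hg with h | h
      exacts [Or.inl h, Or.inr h]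
    · intro e he
      exact PsiProof.nu4_face μ hHaar r hr e he
  refine ⟨?_, hnot 3 (by norm_num),
    fun hJR => hnot 2 (by norm_num) (hJR 4 (by norm_num))⟩
  intro m hm ν hproj hinv hface
  haveI : IsProbabilityMeasure ν := by
    constructor
    have h := hproj ⟨0, by omega⟩
    have huniv : ν Set.univ
        = Measure.map (fun x : Fin (2*m+1) → (ℕ → ZMod 2) => x ⟨0, by omega⟩) ν
            Set.univ := by
      rw [Measure.map_apply (measurable_pi_apply _) MeasurableSet.univ, Set.preimage_univ]
    rw [huniv, h]
    exact measure_univ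
  refine PsiProof.partA μ hHaar m ?_ ?_ ?_
  · intro σ
    exact hinv _ (Or.inl ⟨σ, rfl⟩)
  · intro α
    exact hinv _ (Or.inr ⟨α, rfl⟩)
  · intro e he
    exact hface e he
end

section
/- Let ν ∈ M₄ and let T_j, T_{1,j}, T_{2,j}, T_{3,j} (j→∞) be sequences of automorphisms of (Y,μ) such that T_j → Id in the Halmos metric (equivalently μ(T_jA Δ A)→0 for every measurable A) and T_{1,j}, T_{2,j}, T_{3,j} →_w Θ. Then the pushforward measures ν_j = (T_j × T_{1,j} × T_{2,j} × T_{3,j})ν converge weakly to μ⁴; that is, ∫_{Y⁴} f⊗f₁⊗f₂⊗f₃ dν_j → (∫f dμ)(∫f₁ dμ)(∫f₂ dμ)(∫f₃ dμ) for all f, f₁, f₂, f₃ ∈ L²(μ). -/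
open MeasureTheory Filter Set
open scoped ENNReal symmDiff

section JLPHelpers

set_option maxHeartbeats 1000000


private lemma tendsto_of_unif (g : ℕ → ℝ) (l : ℝ)
    (h : ∀ ε : ℝ, 0 < ε → ∃ (g' : ℕ → ℝ) (l' : ℝ), Tendsto g' atTop (nhds l') ∧
      (∀ j, |g j - g' j| ≤ ε) ∧ |l' - l| ≤ ε) :
    Tendsto g atTop (nhds l) := by
  rw [Metric.tendsto_atTop]
  intro ε hε
  obtain ⟨g', l', hg', hgg, hll⟩ := h (ε/4) (by linarith)
  rw [Metric.tendsto_atTop] at hg'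
  obtain ⟨N, hN⟩ := hg' (ε/4) (by linarith)
  refine ⟨N, fun n hn => ?_⟩
  have := hN n hn
  rw [Real.dist_eq] at this ⊢
  have h1 := hgg n
  calc |g n - l| = |(g n - g' n) + (g' n - l') + (l' - l)| := by ring_nf
    _ ≤ |(g n - g' n) + (g' n - l')| + |l' - l| := abs_add_le _ _
    _ ≤ |g n - g' n| + |g' n - l'| + |l' - l| := by gcongr; exact abs_add_le _ _
    _ < ε := by linarith

lemma cs_mul {Z : Type*} [MeasurableSpace Z] {ρ : Measure Z} {u v : Z → ℝ}
    (hu : MemLp u 2 ρ) (hv : MemLp v 2 ρ) :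
    |∫ z, u z * v z ∂ρ| ≤ (eLpNorm u 2 ρ).toReal * (eLpNorm v 2 ρ).toReal := by
  have key : ∫ z, u z * v z ∂ρ = @inner ℝ _ _ (hu.toLp u) (hv.toLp v) := by
    rw [L2.inner_def]
    refine integral_congr_ae ?_
    filter_upwards [hu.coeFn_toLp, hv.coeFn_toLp] with z h1 h2
    simp [h1, h2, RCLike.inner_apply, conj_trivial]; ring
  rw [key]
  calc |@inner ℝ _ _ (hu.toLp u) (hv.toLp v)| ≤ ‖hu.toLp u‖ * ‖hv.toLp v‖ :=
        abs_real_inner_le_norm _ _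
    _ = _ := by rw [Lp.norm_toLp, Lp.norm_toLp]

private lemma integrable_mul_L2 {Z : Type*} [MeasurableSpace Z] {ρ : Measure Z} {u v : Z → ℝ}
    (hu : MemLp u 2 ρ) (hv : MemLp v 2 ρ) :
    Integrable (fun z => u z * v z) ρ := by
  have := L2.integrable_inner (𝕜 := ℝ) (hu.toLp u) (hv.toLp v)
  refine this.congr ?_
  filter_upwards [hu.coeFn_toLp, hv.coeFn_toLp] with z h1 h2
  simp [h1, h2, RCLike.inner_apply, conj_trivial]; ring


private lemma eLpNorm_prod_mul {X Z : Type*} [MeasurableSpace X] [MeasurableSpace Z]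
    {μ : Measure X} {ρ : Measure Z} [SFinite μ] [SFinite ρ] {u : X → ℝ} {v : Z → ℝ}
    (hu : AEStronglyMeasurable u μ) (hv : AEStronglyMeasurable v ρ)
    (huv : AEStronglyMeasurable (fun p : X × Z => u p.1 * v p.2) (μ.prod ρ)) :
    eLpNorm (fun p : X × Z => u p.1 * v p.2) 2 (μ.prod ρ) = eLpNorm u 2 μ * eLpNorm v 2 ρ := by
  rw [eLpNorm_eq_lintegral_rpow_enorm_toReal two_ne_zero ENNReal.ofNat_ne_top,
    eLpNorm_eq_lintegral_rpow_enorm_toReal two_ne_zero ENNReal.ofNat_ne_top,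
    eLpNorm_eq_lintegral_rpow_enorm_toReal two_ne_zero ENNReal.ofNat_ne_top]
  have h1 : ∀ p : X × Z, ‖u p.1 * v p.2‖ₑ ^ (2:ℝ≥0∞).toReal
      = ‖u p.1‖ₑ ^ (2:ℝ≥0∞).toReal * ‖v p.2‖ₑ ^ (2:ℝ≥0∞).toReal := by
    intro p
    rw [enorm_mul, ENNReal.mul_rpow_of_nonneg]
    positivity
  simp_rw [h1]
  rw [lintegral_prod_mul ((hu.enorm).pow_const _) ((hv.enorm).pow_const _),
    ENNReal.mul_rpow_of_nonneg]
  positivity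

private lemma setIntegral_abs_le {Z : Type*} [MeasurableSpace Z] {ρ : Measure Z}
    [IsFiniteMeasure ρ] {w : Z → ℝ} (hw : MemLp w 2 ρ) {D : Set Z} (hD : MeasurableSet D) :
    |∫ z in D, w z ∂ρ| ≤ (eLpNorm w 2 ρ).toReal * ((ρ D).toReal) ^ ((1:ℝ)/2) := by
  have hind : MemLp (D.indicator (fun _ => (1:ℝ))) 2 ρ := (memLp_const 1).indicator hD
  have heq : ∫ z in D, w z ∂ρ = ∫ z, w z * D.indicator (fun _ => (1:ℝ)) z ∂ρ := by
    rw [← integral_indicator hD]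
    refine integral_congr_ae (Eventually.of_forall fun z => ?_)
    by_cases hz : z ∈ D <;> simp [Set.indicator_apply, hz]
  rw [heq]
  refine (cs_mul hw hind).trans ?_
  gcongr
  rw [eLpNorm_indicator_const hD two_ne_zero ENNReal.ofNat_ne_top]
  simp only [enorm_one, one_mul]
  rw [ENNReal.toReal_rpow]
  norm_num




set_option maxHeartbeats 1000000

private lemma memLp_prod_mul {X Z : Type*} [MeasurableSpace X] [MeasurableSpace Z]
    {μ : Measure X} {ρ : Measure Z} [SFinite μ] [SFinite ρ] {u : X → ℝ} {v : Z → ℝ}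
    (hu : MemLp u 2 μ) (hv : MemLp v 2 ρ) :
    MemLp (fun p : X × Z => u p.1 * v p.2) 2 (μ.prod ρ) := by
  have hasm : AEStronglyMeasurable (fun p : X × Z => u p.1 * v p.2) (μ.prod ρ) :=
    (hu.1.comp_quasiMeasurePreserving Measure.quasiMeasurePreserving_fst).mul
      (hv.1.comp_quasiMeasurePreserving Measure.quasiMeasurePreserving_snd)
  refine ⟨hasm, ?_⟩
  rw [eLpNorm_prod_mul hu.1 hv.1 hasm]
  exact ENNReal.mul_lt_top hu.2 hv.2

-- T_j → Id in L²
private lemma tendsto_eLpNorm_comp {Y : Type*} [MeasurableSpace Y] (μ : Measure Y)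
    [IsProbabilityMeasure μ] (T : ℕ → Y ≃ᵐ Y) (hT : ∀ j, MeasurePreserving (T j) μ μ)
    (hTid : ∀ A : Set Y, MeasurableSet A →
      Tendsto (fun j => μ ((T j '' A) ∆ A)) atTop (nhds 0))
    (f : Y → ℝ) (hf : MemLp f 2 μ) :
    Tendsto (fun j => eLpNorm (fun y => f (T j y) - f y) 2 μ) atTop (nhds 0) := by
  -- preimage version of hTid
  have hTid' : ∀ A : Set Y, MeasurableSet A →
      Tendsto (fun j => μ ((T j ⁻¹' A) ∆ A)) atTop (nhds 0) := by
    intro A hA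
    have key : ∀ j, μ ((T j ⁻¹' A) ∆ A) = μ ((T j '' A) ∆ A) := by
      intro j
      have h1 : T j '' ((T j ⁻¹' A) ∆ A) = A ∆ (T j '' A) := by
        rw [Set.image_symmDiff (T j).injective, Set.image_preimage_eq _ (T j).surjective]
      have h2 : μ (T j '' ((T j ⁻¹' A) ∆ A)) = μ ((T j ⁻¹' A) ∆ A) := by
        rw [MeasurableEquiv.image_eq_preimage_symm]
        exact ((hT j).symm (T j)).measure_preimage_equiv _
      rw [← h2, h1, symmDiff_comm]
    simpa only [key] using hTid A hA
  -- indicator case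
  have hindic : ∀ (c : ℝ) (s : Set Y), MeasurableSet s →
      Tendsto (fun j => eLpNorm
        (fun y => s.indicator (fun _ => c) (T j y) - s.indicator (fun _ => c) y) 2 μ)
        atTop (nhds 0) := by
    intro c s hs
    have hbound : ∀ j, eLpNorm
        (fun y => s.indicator (fun _ => c) (T j y) - s.indicator (fun _ => c) y) 2 μ
        ≤ (‖c‖₊ : ℝ≥0∞) * (μ ((T j ⁻¹' s) ∆ s)) ^ ((1:ℝ)/(2:ℝ≥0∞).toReal) := by
      intro j
      have hmeas : MeasurableSet ((T j ⁻¹' s) ∆ s) := ((T j).measurable hs).symmDiff hs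
      have hmono : eLpNorm
          (fun y => s.indicator (fun _ => c) (T j y) - s.indicator (fun _ => c) y) 2 μ
          ≤ eLpNorm (((T j ⁻¹' s) ∆ s).indicator (fun _ => ‖c‖)) 2 μ := by
        refine eLpNorm_mono fun y => ?_
        by_cases h1 : T j y ∈ s <;> by_cases h2 : y ∈ s <;>
          simp [Set.indicator_apply, Set.mem_symmDiff, Set.mem_preimage, h1, h2,
            abs_of_nonneg, norm_norm]
      refine hmono.trans ?_
      rw [eLpNorm_indicator_const hmeas two_ne_zero ENNReal.ofNat_ne_top]
      simp [enorm_eq_nnnorm]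
    have h2 : Tendsto (fun j => (‖c‖₊ : ℝ≥0∞) * (μ ((T j ⁻¹' s) ∆ s)) ^ ((1:ℝ)/(2:ℝ≥0∞).toReal))
        atTop (nhds 0) :=
      (ENNReal.tendsto_const_mul_rpow_nhds_zero_of_pos ENNReal.coe_ne_top
        (by norm_num)).comp (hTid' s hs)
    exact tendsto_of_tendsto_of_tendsto_of_le_of_le tendsto_const_nhds h2
      (fun j => by simp) hbound
  -- simple function case
  have hsimple : ∀ g : SimpleFunc Y ℝ,
      Tendsto (fun j => eLpNorm (fun y => g (T j y) - g y) 2 μ) atTop (nhds 0) := by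
    intro g
    induction g using SimpleFunc.induction with
    | @const c s hs =>
      have hcoe : ∀ y, (SimpleFunc.piecewise s hs (SimpleFunc.const Y c)
          (SimpleFunc.const Y 0)) y = s.indicator (fun _ => c) y := by
        intro y; by_cases hy : y ∈ s <;>
          simp [SimpleFunc.piecewise_apply, Set.indicator_apply, hy]
      simp only [hcoe]
      exact hindic c s hs
    | @add g1 g2 hdisj hg1 hg2 =>
      have hbound : ∀ j, eLpNorm (fun y => (g1 + g2) (T j y) - (g1 + g2) y) 2 μ
          ≤ eLpNorm (fun y => g1 (T j y) - g1 y) 2 μ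
            + eLpNorm (fun y => g2 (T j y) - g2 y) 2 μ := by
        intro j
        have heq : (fun y => (g1 + g2) (T j y) - (g1 + g2) y)
            = (fun y => g1 (T j y) - g1 y) + (fun y => g2 (T j y) - g2 y) := by
          funext y
          simp only [SimpleFunc.coe_add, Pi.add_apply]
          ring
        rw [heq]
        refine eLpNorm_add_le ?_ ?_ one_le_two
        · exact ((g1.stronglyMeasurable.measurable.comp (T j).measurable).sub
            g1.stronglyMeasurable.measurable).stronglyMeasurable.aestronglyMeasurable
        · exact ((g2.stronglyMeasurable.measurable.comp (T j).measurable).sub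
            g2.stronglyMeasurable.measurable).stronglyMeasurable.aestronglyMeasurable
      have h2 : Tendsto (fun j => eLpNorm (fun y => g1 (T j y) - g1 y) 2 μ
          + eLpNorm (fun y => g2 (T j y) - g2 y) 2 μ) atTop (nhds 0) := by
        simpa using hg1.add hg2
      exact tendsto_of_tendsto_of_tendsto_of_le_of_le tendsto_const_nhds h2
        (fun j => by simp) hbound
  -- general case
  rw [ENNReal.tendsto_nhds_zero]
  intro ε hε
  set δ : ℝ≥0∞ := min 1 ε / 3 with hδdef
  have hmin : (min 1 ε : ℝ≥0∞) ≠ 0 := (lt_min one_pos hε).ne'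
  have hδ0 : δ ≠ 0 := (ENNReal.div_pos hmin (by norm_num)).ne'
  obtain ⟨g, hgclose, hgmem⟩ := hf.exists_simpleFunc_eLpNorm_sub_lt ENNReal.ofNat_ne_top hδ0
  have h3δ : δ + δ + δ ≤ ε := by
    have h33 : δ + δ + δ = 3 * δ := by ring
    rw [h33, hδdef, ENNReal.mul_div_cancel' (by norm_num) (by norm_num)]
    exact min_le_right _ _
  filter_upwards [(ENNReal.tendsto_nhds_zero.mp (hsimple g)) δ
    (pos_iff_ne_zero.mpr hδ0)] with j hj
  have a2 : AEStronglyMeasurable (fun y => g (T j y) - g y) μ :=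
    ((g.stronglyMeasurable.measurable.comp (T j).measurable).sub
      g.stronglyMeasurable.measurable).stronglyMeasurable.aestronglyMeasurable
  have a3 : AEStronglyMeasurable (fun y => g y - f y) μ :=
    g.stronglyMeasurable.aestronglyMeasurable.sub hf.1
  have a1 : AEStronglyMeasurable (fun y => f (T j y) - g (T j y)) μ :=
    (hf.1.comp_quasiMeasurePreserving (hT j).quasiMeasurePreserving).sub
      (g.stronglyMeasurable.measurable.comp (T j).measurable).stronglyMeasurable.aestronglyMeasurable
  have hb : eLpNorm (fun y => f (T j y) - f y) 2 μ
      ≤ eLpNorm (fun y => f (T j y) - g (T j y)) 2 μ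
        + (eLpNorm (fun y => g (T j y) - g y) 2 μ + eLpNorm (fun y => g y - f y) 2 μ) := by
    have hsplit : (fun y => f (T j y) - f y)
        = (fun y => f (T j y) - g (T j y))
          + ((fun y => g (T j y) - g y) + (fun y => g y - f y)) := by
      funext y
      simp only [Pi.add_apply]
      ring
    rw [hsplit]
    exact (eLpNorm_add_le a1 (a2.add a3) one_le_two).trans
      (by gcongr; exact eLpNorm_add_le a2 a3 one_le_two)
  have e1 : eLpNorm (fun y => f (T j y) - g (T j y)) 2 μ
      = eLpNorm (fun y => f y - g y) 2 μ := by
    have h := eLpNorm_comp_measurePreserving (μ := μ) (p := 2)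
      (g := fun y => f y - g y) (hf.1.sub g.stronglyMeasurable.aestronglyMeasurable) (hT j)
    simpa [Function.comp_def] using h
  have e2 : eLpNorm (fun y => g y - f y) 2 μ = eLpNorm (fun y => f y - g y) 2 μ := by
    rw [← eLpNorm_neg]
    congr 1
    funext y
    simp only [Pi.neg_apply]
    ring
  have hclose : eLpNorm (fun y => f y - g y) 2 μ ≤ δ := le_of_lt hgclose
  calc eLpNorm (fun y => f (T j y) - f y) 2 μ
      ≤ eLpNorm (fun y => f (T j y) - g (T j y)) 2 μ
        + (eLpNorm (fun y => g (T j y) - g y) 2 μ + eLpNorm (fun y => g y - f y) 2 μ) := hb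
    _ ≤ δ + (δ + δ) := by rw [e1, e2]; gcongr
    _ ≤ ε := le_of_eq_of_le (add_assoc δ δ δ).symm h3δ

end JLPHelpers

set_option maxHeartbeats 2000000 in
set_option synthInstance.maxHeartbeats 400000 in
/-- **Lemma 3.3.** Let `ν ∈ M₄` and let `T_j → Id` in the Halmos metric
(equivalently `μ(T_jA Δ A) → 0` for every measurable `A`) while `T_{1,j}, T_{2,j}, T_{3,j}`
converge weakly (as Koopman operators) to `Θ`. Then
`(T_j × T_{1,j} × T_{2,j} × T_{3,j})ν → μ⁴` weakly. -/
theorem joining_limit_product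
    {Y : Type*} [MeasurableSpace Y] [StandardBorelSpace Y]
    (μ : Measure Y) [IsProbabilityMeasure μ]
    (ν : Measure (Y × Y × Y × Y))
    (hν1 : Measure.map Prod.fst ν = μ)
    (hν2 : Measure.map Prod.snd ν = μ.prod (μ.prod μ))
    (T T1 T2 T3 : ℕ → Y ≃ᵐ Y)
    (hT : ∀ j, MeasurePreserving (T j) μ μ) (hT1 : ∀ j, MeasurePreserving (T1 j) μ μ)
    (hT2 : ∀ j, MeasurePreserving (T2 j) μ μ) (hT3 : ∀ j, MeasurePreserving (T3 j) μ μ)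
    (hTid : ∀ A : Set Y, MeasurableSet A →
      Tendsto (fun j => μ ((T j '' A) ∆ A)) atTop (nhds 0))
    (hw1 : ∀ f g : Y → ℝ, MemLp f 2 μ → MemLp g 2 μ →
      Tendsto (fun j => ∫ y, f (T1 j y) * g y ∂μ) atTop
        (nhds ((∫ y, f y ∂μ) * ∫ y, g y ∂μ)))
    (hw2 : ∀ f g : Y → ℝ, MemLp f 2 μ → MemLp g 2 μ →
      Tendsto (fun j => ∫ y, f (T2 j y) * g y ∂μ) atTop
        (nhds ((∫ y, f y ∂μ) * ∫ y, g y ∂μ)))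
    (hw3 : ∀ f g : Y → ℝ, MemLp f 2 μ → MemLp g 2 μ →
      Tendsto (fun j => ∫ y, f (T3 j y) * g y ∂μ) atTop
        (nhds ((∫ y, f y ∂μ) * ∫ y, g y ∂μ))) :
    ∀ f f1 f2 f3 : Y → ℝ, MemLp f 2 μ → MemLp f1 2 μ → MemLp f2 2 μ → MemLp f3 2 μ →
      Tendsto (fun j => ∫ q, f q.1 * f1 q.2.1 * f2 q.2.2.1 * f3 q.2.2.2
          ∂(Measure.map (fun q : Y × Y × Y × Y =>
              (T j q.1, T1 j q.2.1, T2 j q.2.2.1, T3 j q.2.2.2)) ν))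
        atTop
        (nhds ((∫ y, f y ∂μ) * (∫ y, f1 y ∂μ) * (∫ y, f2 y ∂μ) * ∫ y, f3 y ∂μ)) := by
  intro f f1 f2 f3 hf hf1 hf2 hf3
  -- ν is a probability measure
  have hνuniv : ν Set.univ = 1 := by
    have h := congrArg (fun m : Measure Y => m Set.univ) hν1
    simpa [Measure.map_apply measurable_fst MeasurableSet.univ] using h
  have hνp : IsProbabilityMeasure ν := ⟨hνuniv⟩
  set μ3 : Measure (Y × Y × Y) := μ.prod (μ.prod μ) with hμ3def
  have hμ3p : IsProbabilityMeasure μ3 := by rw [hμ3def]; infer_instance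
  -- projections are measure preserving
  have mpfst : MeasurePreserving (Prod.fst : Y × Y × Y × Y → Y) ν μ := ⟨measurable_fst, hν1⟩
  have mpsnd : MeasurePreserving (Prod.snd : Y × Y × Y × Y → Y × Y × Y) ν μ3 :=
    ⟨measurable_snd, hν2⟩
  -- the function h j on Y × Y × Y
  set h : ℕ → (Y × Y × Y) → ℝ :=
    fun j y => f1 (T1 j y.1) * (f2 (T2 j y.2.1) * f3 (T3 j y.2.2)) with hhdef
  have hf1T : ∀ j, MemLp (fun y => f1 (T1 j y)) 2 μ := fun j => hf1.comp_measurePreserving (hT1 j)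
  have hf2T : ∀ j, MemLp (fun y => f2 (T2 j y)) 2 μ := fun j => hf2.comp_measurePreserving (hT2 j)
  have hf3T : ∀ j, MemLp (fun y => f3 (T3 j y)) 2 μ := fun j => hf3.comp_measurePreserving (hT3 j)
  have hvmem : ∀ j, MemLp (fun y : Y × Y => f2 (T2 j y.1) * f3 (T3 j y.2)) 2 (μ.prod μ) :=
    fun j => memLp_prod_mul (hf2T j) (hf3T j)
  have hmem : ∀ j, MemLp (h j) 2 μ3 := fun j => memLp_prod_mul (hf1T j) (hvmem j)
  have hint : ∀ j, Integrable (h j) μ3 := fun j => (hmem j).integrable one_le_two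
  -- eLpNorm of h j is constant
  have hcompnorm : ∀ (g : Y → ℝ), MemLp g 2 μ → ∀ (S : Y ≃ᵐ Y), MeasurePreserving S μ μ →
      eLpNorm (fun y => g (S y)) 2 μ = eLpNorm g 2 μ := by
    intro g hg S hS
    have hh := eLpNorm_comp_measurePreserving (μ := μ) (p := 2) (g := g) hg.1 hS
    simpa [Function.comp_def] using hh
  set K : ℝ := (eLpNorm f1 2 μ).toReal * ((eLpNorm f2 2 μ).toReal * (eLpNorm f3 2 μ).toReal)
    with hKdef
  have hK0 : 0 ≤ K := by positivity
  have hKnorm : ∀ j, (eLpNorm (h j) 2 μ3).toReal = K := by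
    intro j
    have e0 : eLpNorm (h j) 2 μ3 = eLpNorm (fun y => f1 (T1 j y)) 2 μ *
        eLpNorm (fun y : Y × Y => f2 (T2 j y.1) * f3 (T3 j y.2)) 2 (μ.prod μ) :=
      eLpNorm_prod_mul (u := fun y => f1 (T1 j y))
        (v := fun z : Y × Y => f2 (T2 j z.1) * f3 (T3 j z.2)) (hf1T j).1 (hvmem j).1 (hmem j).1
    have e1 : eLpNorm (fun y : Y × Y => f2 (T2 j y.1) * f3 (T3 j y.2)) 2 (μ.prod μ)
        = eLpNorm (fun y => f2 (T2 j y)) 2 μ * eLpNorm (fun y => f3 (T3 j y)) 2 μ :=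
      eLpNorm_prod_mul (u := fun y => f2 (T2 j y))
        (v := fun y => f3 (T3 j y)) (hf2T j).1 (hf3T j).1 (hvmem j).1
    rw [e0, e1, hcompnorm f1 hf1 _ (hT1 j), hcompnorm f2 hf2 _ (hT2 j),
      hcompnorm f3 hf3 _ (hT3 j), ENNReal.toReal_mul, ENNReal.toReal_mul]
  -- the limit constant
  set c1 : ℝ := ∫ y, f1 y ∂μ
  set c2 : ℝ := ∫ y, f2 y ∂μ
  set c3 : ℝ := ∫ y, f3 y ∂μ
  set c' : ℝ := c1 * (c2 * c3) with hc'def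
  -- total integral of h j
  have htotal : ∀ j, ∫ y, h j y ∂μ3 = c' := by
    intro j
    have e0 : ∫ y, h j y ∂μ3 = (∫ x, f1 (T1 j x) ∂μ) *
        ∫ y : Y × Y, f2 (T2 j y.1) * f3 (T3 j y.2) ∂(μ.prod μ) :=
      integral_prod_mul (fun x => f1 (T1 j x)) (fun y : Y × Y => f2 (T2 j y.1) * f3 (T3 j y.2))
    have e1 : ∫ y : Y × Y, f2 (T2 j y.1) * f3 (T3 j y.2) ∂(μ.prod μ)
        = (∫ x, f2 (T2 j x) ∂μ) * ∫ x, f3 (T3 j x) ∂μ :=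
      integral_prod_mul (fun x => f2 (T2 j x)) (fun x => f3 (T3 j x))
    rw [e0, e1, (hT1 j).integral_comp' f1, (hT2 j).integral_comp' f2, (hT3 j).integral_comp' f3]
  -- uniform bound on set integrals
  have hsetbd : ∀ (j : ℕ) (D : Set (Y × Y × Y)), MeasurableSet D →
      |∫ y in D, h j y ∂μ3| ≤ K * ((μ3 D).toReal) ^ ((1:ℝ)/2) := by
    intro j D hD
    have := setIntegral_abs_le (hmem j) hD
    rwa [hKnorm j] at this
  -- per-coordinate convergence on sets
  have hco : ∀ (u : Y → ℝ), MemLp u 2 μ → ∀ (Tw : ℕ → Y ≃ᵐ Y),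
      (∀ v g : Y → ℝ, MemLp v 2 μ → MemLp g 2 μ →
        Tendsto (fun j => ∫ y, v (Tw j y) * g y ∂μ) atTop
          (nhds ((∫ y, v y ∂μ) * ∫ y, g y ∂μ))) →
      ∀ (A : Set Y), MeasurableSet A →
      Tendsto (fun j => ∫ y in A, u (Tw j y) ∂μ) atTop
        (nhds ((∫ y, u y ∂μ) * (μ A).toReal)) := by
    intro u hu Tw hwk A hA
    have hw := hwk u (A.indicator fun _ => (1:ℝ)) hu ((memLp_const 1).indicator hA)
    have heq : ∀ j, ∫ y, u (Tw j y) * A.indicator (fun _ => (1:ℝ)) y ∂μ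
        = ∫ y in A, u (Tw j y) ∂μ := by
      intro j
      rw [← integral_indicator hA]
      refine integral_congr_ae (Eventually.of_forall fun y => ?_)
      by_cases hy : y ∈ A <;> simp [Set.indicator_apply, hy]
    have hval : ∫ y, A.indicator (fun _ => (1:ℝ)) y ∂μ = (μ A).toReal := by
      rw [integral_indicator_const (1:ℝ) hA]; simp; rfl
    rw [hval] at hw
    simpa only [heq] using hw

  -- rectangles
  have hrect : ∀ A B C : Set Y, MeasurableSet A → MeasurableSet B → MeasurableSet C →
      Tendsto (fun j => ∫ y in A ×ˢ (B ×ˢ C), h j y ∂μ3) atTop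
        (nhds (c' * (μ3 (A ×ˢ (B ×ˢ C))).toReal)) := by
    intro A B C hA hB hC
    have hfact : ∀ j, ∫ y in A ×ˢ (B ×ˢ C), h j y ∂μ3
        = (∫ y in A, f1 (T1 j y) ∂μ) *
          ((∫ y in B, f2 (T2 j y) ∂μ) * (∫ y in C, f3 (T3 j y) ∂μ)) := by
      intro j
      have e0 := setIntegral_prod_mul (μ := μ) (ν := μ.prod μ) (fun y => f1 (T1 j y))
        (fun z : Y × Y => f2 (T2 j z.1) * f3 (T3 j z.2)) A (B ×ˢ C)
      have e1 := setIntegral_prod_mul (μ := μ) (ν := μ) (fun y => f2 (T2 j y))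
        (fun y => f3 (T3 j y)) B C
      rw [hhdef]
      rw [e0, e1]
    have hmeasval : c' * (μ3 (A ×ˢ (B ×ˢ C))).toReal
        = ((∫ y, f1 y ∂μ) * (μ A).toReal) * (((∫ y, f2 y ∂μ) * (μ B).toReal) *
          ((∫ y, f3 y ∂μ) * (μ C).toReal)) := by
      rw [hμ3def, Measure.prod_prod, Measure.prod_prod, ENNReal.toReal_mul, ENNReal.toReal_mul,
        hc'def]
      ring
    rw [hmeasval]
    simp only [hfact]
    exact ((hco f1 hf1 T1 hw1 A hA).mul ((hco f2 hf2 T2 hw2 B hB).mul (hco f3 hf3 T3 hw3 C hC)))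
  -- the Dynkin argument
  have core : ∀ E : Set (Y × Y × Y), MeasurableSet E →
      Tendsto (fun j => ∫ y in E, h j y ∂μ3) atTop (nhds (c' * (μ3 E).toReal)) := by
    have hspan : IsCountablySpanning
        (image2 (· ×ˢ ·) {s : Set Y | MeasurableSet s} {s : Set Y | MeasurableSet s}) :=
      ⟨fun _ => Set.univ ×ˢ Set.univ,
        fun _ => Set.mem_image2_of_mem MeasurableSet.univ MeasurableSet.univ, by simp [Set.iUnion_const]⟩
    have hgen : (inferInstance : MeasurableSpace (Y × Y × Y)) = MeasurableSpace.generateFrom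
        (image2 (· ×ˢ ·) {s : Set Y | MeasurableSet s}
          (image2 (· ×ˢ ·) {s : Set Y | MeasurableSet s} {s : Set Y | MeasurableSet s})) :=
      (generateFrom_eq_prod MeasurableSpace.generateFrom_measurableSet generateFrom_prod
        isCountablySpanning_measurableSet hspan).symm
    have hpi : IsPiSystem (image2 (· ×ˢ ·) {s : Set Y | MeasurableSet s}
        (image2 (· ×ˢ ·) {s : Set Y | MeasurableSet s} {s : Set Y | MeasurableSet s})) :=
      MeasurableSpace.isPiSystem_measurableSet.prod isPiSystem_prod
    intro E hE
    refine MeasurableSpace.induction_on_inter (C := fun E _ =>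
      Tendsto (fun j => ∫ y in E, h j y ∂μ3) atTop (nhds (c' * (μ3 E).toReal)))
      hgen hpi ?_ ?_ ?_ ?_ E hE
    · simpa using tendsto_const_nhds
    · rintro t ⟨A, hA, _, ⟨B, hB, C0, hC0, rfl⟩, rfl⟩
      exact hrect A B C0 hA hB hC0
    · intro t ht hCt
      have heqc : ∀ j, ∫ y in tᶜ, h j y ∂μ3 = c' - ∫ y in t, h j y ∂μ3 := by
        intro j
        have hic := integral_add_compl ht (hint j)
        rw [htotal j] at hic
        linarith
      have hval : c' * (μ3 tᶜ).toReal = c' - c' * (μ3 t).toReal := by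
        rw [prob_compl_eq_one_sub ht, ENNReal.toReal_sub_of_le prob_le_one ENNReal.one_ne_top]
        simp only [ENNReal.toReal_one]
        ring
      rw [hval]
      simp only [heqc]
      exact tendsto_const_nhds.sub hCt
    · intro E hdisj hmeasE hCE
      have hEU : MeasurableSet (⋃ n, E n) := MeasurableSet.iUnion hmeasE
      set UN : ℕ → Set (Y × Y × Y) := fun N => ⋃ n ∈ Finset.range N, E n with hUNdef
      have hUNmeas : ∀ N, MeasurableSet (UN N) :=
        fun N => (Finset.range N).measurableSet_biUnion (fun n _ => hmeasE n)
      have hUNsub : ∀ N, UN N ⊆ ⋃ n, E n :=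
        fun N => Set.iUnion₂_subset fun n _ => Set.subset_iUnion E n
      have hUNle : ∀ N, (μ3 (UN N)).toReal ≤ (μ3 (⋃ n, E n)).toReal :=
        fun N => ENNReal.toReal_mono (measure_ne_top _ _) (measure_mono (hUNsub N))
      have hUNval : ∀ N, μ3 (UN N) = ∑ n ∈ Finset.range N, μ3 (E n) := by
        intro N
        rw [hUNdef]
        exact measure_biUnion_finset (fun i _ j _ hij => hdisj hij) (fun n _ => hmeasE n)
      have hpartial : Tendsto (fun N => (μ3 (UN N)).toReal) atTop
          (nhds ((μ3 (⋃ n, E n)).toReal)) := by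
        have h1 : μ3 (⋃ n, E n) = ∑' n, μ3 (E n) := measure_iUnion hdisj hmeasE
        have h2 : Tendsto (fun N => ∑ n ∈ Finset.range N, μ3 (E n)) atTop
            (nhds (∑' n, μ3 (E n))) := ENNReal.tendsto_nat_tsum _
        have h3 := (ENNReal.tendsto_toReal (by rw [← h1]; exact measure_ne_top _ _)).comp h2
        rw [← h1] at h3
        refine h3.congr fun N => ?_
        simp only [Function.comp_apply]
        rw [hUNval N]
      have hdiffval : ∀ N, (μ3 ((⋃ n, E n) \ UN N)).toReal
          = (μ3 (⋃ n, E n)).toReal - (μ3 (UN N)).toReal := by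
        intro N
        rw [measure_diff (hUNsub N) (hUNmeas N).nullMeasurableSet (measure_ne_top _ _),
          ENNReal.toReal_sub_of_le (measure_mono (hUNsub N)) (measure_ne_top _ _)]
      have hsplitI : ∀ j N, ∫ y in ⋃ n, E n, h j y ∂μ3
          = ∫ y in UN N, h j y ∂μ3 + ∫ y in (⋃ n, E n) \ UN N, h j y ∂μ3 := by
        intro j N
        rw [← setIntegral_union Set.disjoint_sdiff_right (hEU.diff (hUNmeas N))
          ((hint j).integrableOn) ((hint j).integrableOn),
          Set.union_diff_cancel (hUNsub N)]
      have hfin : ∀ N, Tendsto (fun j => ∫ y in UN N, h j y ∂μ3) atTop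
          (nhds (c' * (μ3 (UN N)).toReal)) := by
        intro N
        have heq : ∀ j, ∫ y in UN N, h j y ∂μ3 = ∑ n ∈ Finset.range N, ∫ y in E n, h j y ∂μ3 :=
          fun j => integral_biUnion_finset (Finset.range N) (fun n _ => hmeasE n)
            (fun i _ j' _ hij => hdisj hij) (fun n _ => (hint j).integrableOn)
        have hsum := tendsto_finset_sum (Finset.range N) (fun n _ => hCE n)
        have hvaleq : ∑ n ∈ Finset.range N, c' * (μ3 (E n)).toReal
            = c' * (μ3 (UN N)).toReal := by
          rw [hUNval N, ← Finset.mul_sum, ENNReal.toReal_sum (fun n _ => measure_ne_top _ _)]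
        rw [hvaleq] at hsum
        simpa only [heq] using hsum
      refine tendsto_of_unif _ _ ?_
      intro ε hε
      set δ : ℝ := min (ε / (|c'| + 1)) ((ε / (K + 1)) ^ 2) with hδdef
      have hδ0 : 0 < δ := by
        refine lt_min ?_ ?_
        · positivity
        · positivity
      obtain ⟨N, hN⟩ := (Metric.tendsto_atTop.mp hpartial) δ hδ0
      have hNd := hN N le_rfl
      rw [Real.dist_eq, abs_sub_lt_iff] at hNd
      have hd0 : 0 ≤ (μ3 (⋃ n, E n)).toReal - (μ3 (UN N)).toReal := by
        have := hUNle N; linarith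
      have hdlt : (μ3 (⋃ n, E n)).toReal - (μ3 (UN N)).toReal < δ := by
        linarith [hNd.2]
      refine ⟨fun j => ∫ y in UN N, h j y ∂μ3, c' * (μ3 (UN N)).toReal, hfin N, ?_, ?_⟩
      · intro j
        rw [hsplitI j N]
        have hb := hsetbd j _ (hEU.diff (hUNmeas N))
        rw [hdiffval N] at hb
        have h12 : ((μ3 (⋃ n, E n)).toReal - (μ3 (UN N)).toReal) ^ ((1:ℝ)/2)
            ≤ ε / (K + 1) := by
          have hδ2 : (μ3 (⋃ n, E n)).toReal - (μ3 (UN N)).toReal ≤ (ε / (K + 1)) ^ 2 :=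
            le_trans hdlt.le (min_le_right _ _)
          have hrw : ((ε / (K + 1)) ^ 2 : ℝ) ^ ((1:ℝ)/2) = ε / (K + 1) := by
            rw [← Real.rpow_natCast (ε / (K + 1)) 2, ← Real.rpow_mul (by positivity)]
            norm_num
          calc ((μ3 (⋃ n, E n)).toReal - (μ3 (UN N)).toReal) ^ ((1:ℝ)/2)
              ≤ ((ε / (K + 1)) ^ 2 : ℝ) ^ ((1:ℝ)/2) :=
                Real.rpow_le_rpow hd0 hδ2 (by norm_num)
            _ = ε / (K + 1) := hrw
        have hKb : K * (((μ3 (⋃ n, E n)).toReal - (μ3 (UN N)).toReal) ^ ((1:ℝ)/2))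
            ≤ ε := by
          calc K * (((μ3 (⋃ n, E n)).toReal - (μ3 (UN N)).toReal) ^ ((1:ℝ)/2))
              ≤ K * (ε / (K + 1)) := by
                refine mul_le_mul_of_nonneg_left h12 hK0
            _ ≤ (K + 1) * (ε / (K + 1)) := by
                refine mul_le_mul_of_nonneg_right (by linarith) (by positivity)
            _ = ε := by field_simp
        calc |∫ y in UN N, h j y ∂μ3 + ∫ y in (⋃ n, E n) \ UN N, h j y ∂μ3
              - ∫ y in UN N, h j y ∂μ3|
            = |∫ y in (⋃ n, E n) \ UN N, h j y ∂μ3| := by congr 1; ring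
          _ ≤ K * (((μ3 (⋃ n, E n)).toReal - (μ3 (UN N)).toReal) ^ ((1:ℝ)/2)) := hb
          _ ≤ ε := hKb
      · have : |c' * (μ3 (UN N)).toReal - c' * (μ3 (⋃ n, E n)).toReal|
            = |c'| * ((μ3 (⋃ n, E n)).toReal - (μ3 (UN N)).toReal) := by
          rw [← mul_sub, abs_mul, abs_sub_comm, abs_of_nonneg hd0]
        rw [this]
        have hd1 : (μ3 (⋃ n, E n)).toReal - (μ3 (UN N)).toReal ≤ ε / (|c'| + 1) :=
          le_trans hdlt.le (min_le_left _ _)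
        calc |c'| * ((μ3 (⋃ n, E n)).toReal - (μ3 (UN N)).toReal)
            ≤ |c'| * (ε / (|c'| + 1)) := mul_le_mul_of_nonneg_left hd1 (abs_nonneg _)
          _ ≤ (|c'| + 1) * (ε / (|c'| + 1)) := by
              refine mul_le_mul_of_nonneg_right (by linarith) (by positivity)
          _ = ε := by field_simp

  -- the L² machinery: a continuous linear functional on L²(μ3)
  have hfmemν : MemLp (fun q : Y × Y × Y × Y => f q.1) 2 ν := hf.comp_measurePreserving mpfst
  have hHmem : ∀ (H : (Y × Y × Y) → ℝ), MemLp H 2 μ3 →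
      MemLp (fun q : Y × Y × Y × Y => H q.2) 2 ν :=
    fun H hH => hH.comp_measurePreserving mpsnd
  have hsnd_ae : ∀ (g g' : (Y × Y × Y) → ℝ), g =ᵐ[μ3] g' →
      (fun q : Y × Y × Y × Y => g q.2) =ᵐ[ν] fun q => g' q.2 := by
    intro g g' hgg
    have h1 : g =ᵐ[Measure.map Prod.snd ν] g' := by rwa [hν2]
    exact ae_eq_comp measurable_snd.aemeasurable h1
  have hsndnorm : ∀ (g : (Y × Y × Y) → ℝ), AEStronglyMeasurable g μ3 →
      eLpNorm (fun q : Y × Y × Y × Y => g q.2) 2 ν = eLpNorm g 2 μ3 := by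
    intro g hg
    have hh := eLpNorm_comp_measurePreserving (μ := ν) (p := 2) (g := g) hg mpsnd
    simpa [Function.comp_def] using hh
  have hfstnorm : ∀ (g : Y → ℝ), AEStronglyMeasurable g μ →
      eLpNorm (fun q : Y × Y × Y × Y => g q.1) 2 ν = eLpNorm g 2 μ := by
    intro g hg
    have hh := eLpNorm_comp_measurePreserving (μ := ν) (p := 2) (g := g) hg mpfst
    simpa [Function.comp_def] using hh
  have hIntH : ∀ (g : Y → ℝ), MemLp g 2 μ → ∀ (H : (Y × Y × Y) → ℝ), MemLp H 2 μ3 →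
      Integrable (fun q : Y × Y × Y × Y => g q.1 * H q.2) ν :=
    fun g hg H hH => integrable_mul_L2 (hg.comp_measurePreserving mpfst) (hHmem H hH)
  -- the linear functional
  set L0 : Lp ℝ 2 μ3 →ₗ[ℝ] ℝ :=
    { toFun := fun H => ∫ q, f q.1 * (H : (Y × Y × Y) → ℝ) q.2 ∂ν
      map_add' := by
        intro H G
        have hadd := hsnd_ae _ _ (Lp.coeFn_add H G)
        have e1 : ∫ q, f q.1 * ((H + G : Lp ℝ 2 μ3) : (Y × Y × Y) → ℝ) q.2 ∂ν
            = ∫ q, (f q.1 * (H : (Y × Y × Y) → ℝ) q.2 + f q.1 * (G : (Y × Y × Y) → ℝ) q.2) ∂ν := by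
          refine integral_congr_ae ?_
          filter_upwards [hadd] with q hq
          rw [hq]
          simp only [Pi.add_apply]
          ring
        rw [e1, integral_add (hIntH f hf _ (Lp.memLp H)) (hIntH f hf _ (Lp.memLp G))]
      map_smul' := by
        intro c H
        have hsmul := hsnd_ae _ _ (Lp.coeFn_smul c H)
        have e1 : ∫ q, f q.1 * ((c • H : Lp ℝ 2 μ3) : (Y × Y × Y) → ℝ) q.2 ∂ν
            = ∫ q, c * (f q.1 * (H : (Y × Y × Y) → ℝ) q.2) ∂ν := by
          refine integral_congr_ae ?_
          filter_upwards [hsmul] with q hq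
          rw [hq]
          simp only [Pi.smul_apply, smul_eq_mul]
          ring
        simp only [RingHom.id_apply]
        rw [e1, integral_const_mul, smul_eq_mul]
      } with hL0def
  have hL0bound : ∀ H : Lp ℝ 2 μ3, ‖L0 H‖ ≤ (eLpNorm f 2 μ).toReal * ‖H‖ := by
    intro H
    have hcs := cs_mul (ρ := ν) hfmemν (hHmem _ (Lp.memLp H))
    rw [hfstnorm f hf.1, hsndnorm _ (Lp.memLp H).1] at hcs
    rw [Real.norm_eq_abs]
    calc |L0 H| ≤ (eLpNorm f 2 μ).toReal * (eLpNorm (H : (Y × Y × Y) → ℝ) 2 μ3).toReal := hcs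
      _ = (eLpNorm f 2 μ).toReal * ‖H‖ := by rw [Lp.norm_def]
  set L : Lp ℝ 2 μ3 →L[ℝ] ℝ := LinearMap.mkContinuous L0 ((eLpNorm f 2 μ).toReal) hL0bound
    with hLdef
  have hLapp : ∀ H : Lp ℝ 2 μ3, L H = ∫ q, f q.1 * (H : (Y × Y × Y) → ℝ) q.2 ∂ν := fun H => rfl
  set F : Lp ℝ 2 μ3 := (InnerProductSpace.toDual ℝ (Lp ℝ 2 μ3)).symm L with hFdef
  have hF : ∀ H : Lp ℝ 2 μ3, (inner ℝ F H : ℝ) = L H :=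
    fun H => InnerProductSpace.toDual_symm_apply
  -- the elements H j and one
  have honemem : MemLp (fun _ : Y × Y × Y => (1:ℝ)) 2 μ3 := memLp_const 1
  set one : Lp ℝ 2 μ3 := honemem.toLp _ with honedef
  set Hl : ℕ → Lp ℝ 2 μ3 := fun j => (hmem j).toLp (h j) with hHldef
  have hHnorm : ∀ j, ‖Hl j‖ = K := by
    intro j
    rw [hHldef]
    rw [Lp.norm_toLp]
    exact hKnorm j
  have hinner_int : ∀ (G : Lp ℝ 2 μ3) (j : ℕ),
      (inner ℝ G (Hl j) : ℝ) = ∫ y, (G : (Y × Y × Y) → ℝ) y * h j y ∂μ3 := by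
    intro G j
    rw [L2.inner_def]
    refine integral_congr_ae ?_
    filter_upwards [(hmem j).coeFn_toLp] with y hy
    simp [hHldef, hy, RCLike.inner_apply, conj_trivial]; ring
  have hinner_one : ∀ G : Lp ℝ 2 μ3,
      (inner ℝ G one : ℝ) = ∫ y, (G : (Y × Y × Y) → ℝ) y ∂μ3 := by
    intro G
    rw [L2.inner_def]
    refine integral_congr_ae ?_
    filter_upwards [honemem.coeFn_toLp] with y hy
    simp [honedef, hy, RCLike.inner_apply, conj_trivial]
  -- the main weak convergence statement
  have main2 : ∀ G : Lp ℝ 2 μ3, Tendsto (fun j => (inner ℝ G (Hl j) : ℝ)) atTop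
      (nhds (c' * (inner ℝ G one : ℝ))) := by
    refine Lp.induction ENNReal.ofNat_ne_top (fun G => Tendsto (fun j => (inner ℝ G (Hl j) : ℝ))
      atTop (nhds (c' * (inner ℝ G one : ℝ)))) ?_ ?_ ?_
    · intro c s hs hμs
      rw [Lp.simpleFunc.coe_indicatorConst]
      have hCGj : ∀ j, (inner ℝ (indicatorConstLp 2 hs hμs.ne c) (Hl j) : ℝ)
          = c * ∫ y in s, h j y ∂μ3 := by
        intro j
        rw [hinner_int]
        have e1 : ∫ y, (indicatorConstLp 2 hs hμs.ne c : (Y × Y × Y) → ℝ) y * h j y ∂μ3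
            = ∫ y, s.indicator (fun x => c * h j x) y ∂μ3 := by
          refine integral_congr_ae ?_
          filter_upwards [indicatorConstLp_coeFn (p := 2) (hs := hs) (hμs := hμs.ne) (c := c)]
            with y hy
          rw [hy]
          by_cases hy' : y ∈ s <;> simp [Set.indicator_apply, hy']
        rw [e1, integral_indicator hs, integral_const_mul]
      have hCone : (inner ℝ (indicatorConstLp 2 hs hμs.ne c) one : ℝ) = c * (μ3 s).toReal := by
        rw [hinner_one]
        have e1 : ∫ y, (indicatorConstLp 2 hs hμs.ne c : (Y × Y × Y) → ℝ) y ∂μ3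
            = ∫ y, s.indicator (fun _ => c) y ∂μ3 := by
          refine integral_congr_ae ?_
          filter_upwards [indicatorConstLp_coeFn (p := 2) (hs := hs) (hμs := hμs.ne) (c := c)]
            with y hy
          rw [hy]
        rw [e1, integral_indicator_const c hs]
        simp [mul_comm]; exact Or.inl rfl
      simp only [hCGj, hCone]
      have hc := (core s hs).const_mul c
      have heq : c' * (c * (μ3 s).toReal) = c * (c' * (μ3 s).toReal) := by ring
      rw [heq]
      exact hc
    · intro u v hu hv hdisj Pu Pv
      simp only [inner_add_left]
      rw [mul_add]
      exact Pu.add Pv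
    · refine IsSeqClosed.isClosed ?_
      intro Gs G hPs hGs
      simp only [Set.mem_setOf_eq] at hPs ⊢
      refine tendsto_of_unif _ _ ?_
      intro ε hε
      set M : ℝ := K + |c'| * ‖one‖ + 1 with hMdef
      have hM0 : 0 < M := by positivity
      obtain ⟨n, hn⟩ := (Metric.tendsto_atTop.mp hGs) (ε / M) (by positivity)
      have hGn : ‖Gs n - G‖ < ε / M := by
        have := hn n le_rfl
        rwa [dist_eq_norm] at this
      refine ⟨fun j => (inner ℝ (Gs n) (Hl j) : ℝ), c' * (inner ℝ (Gs n) one : ℝ), hPs n, ?_, ?_⟩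
      · intro j
        have e1 : (inner ℝ G (Hl j) : ℝ) - (inner ℝ (Gs n) (Hl j) : ℝ)
            = (inner ℝ (G - Gs n) (Hl j) : ℝ) := by rw [inner_sub_left]
        rw [e1]
        calc |(inner ℝ (G - Gs n) (Hl j) : ℝ)| ≤ ‖G - Gs n‖ * ‖Hl j‖ := abs_real_inner_le_norm _ _
          _ = ‖Gs n - G‖ * K := by rw [norm_sub_rev, hHnorm j]
          _ ≤ (ε / M) * K := by
              refine mul_le_mul_of_nonneg_right hGn.le hK0
          _ ≤ (ε / M) * M := by
              refine mul_le_mul_of_nonneg_left ?_ (by positivity)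
              rw [hMdef]
              have : 0 ≤ |c'| * ‖one‖ := by positivity
              linarith
          _ = ε := by field_simp
      · have e1 : c' * (inner ℝ (Gs n) one : ℝ) - c' * (inner ℝ G one : ℝ)
            = c' * (inner ℝ (Gs n - G) one : ℝ) := by rw [inner_sub_left]; ring
        rw [e1, abs_mul]
        calc |c'| * |(inner ℝ (Gs n - G) one : ℝ)| ≤ |c'| * (‖Gs n - G‖ * ‖one‖) :=
              mul_le_mul_of_nonneg_left (abs_real_inner_le_norm _ _) (abs_nonneg _)
          _ ≤ |c'| * ((ε / M) * ‖one‖) := by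
              refine mul_le_mul_of_nonneg_left ?_ (abs_nonneg _)
              exact mul_le_mul_of_nonneg_right hGn.le (norm_nonneg _)
          _ = (ε / M) * (|c'| * ‖one‖) := by ring
          _ ≤ (ε / M) * M := by
              refine mul_le_mul_of_nonneg_left ?_ (by positivity)
              rw [hMdef]
              linarith [hK0]
          _ = ε := by field_simp

  -- identify L (Hl j) and L one
  have hB : ∀ j, L (Hl j) = ∫ q : Y × Y × Y × Y, f q.1 * h j q.2 ∂ν := by
    intro j
    rw [hLapp]
    refine integral_congr_ae ?_
    filter_upwards [hsnd_ae _ _ ((hmem j).coeFn_toLp)] with q hq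
    rw [hq]
  have hLone : L one = ∫ y, f y ∂μ := by
    rw [hLapp]
    have e1 : ∫ q : Y × Y × Y × Y, f q.1 * (one : (Y × Y × Y) → ℝ) q.2 ∂ν
        = ∫ q : Y × Y × Y × Y, f q.1 ∂ν := by
      refine integral_congr_ae ?_
      filter_upwards [hsnd_ae _ _ (honemem.coeFn_toLp)] with q hq
      rw [hq, mul_one]
    have hgm : AEStronglyMeasurable f (Measure.map Prod.fst ν) := by
      rw [hν1]; exact hf.1
    rw [e1]
    calc ∫ q : Y × Y × Y × Y, f q.1 ∂ν
        = ∫ y, f y ∂(Measure.map Prod.fst ν) :=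
          (integral_map measurable_fst.aemeasurable hgm).symm
      _ = ∫ y, f y ∂μ := by rw [hν1]
  have hBt : Tendsto (fun j => ∫ q : Y × Y × Y × Y, f q.1 * h j q.2 ∂ν) atTop
      (nhds (c' * ∫ y, f y ∂μ)) := by
    have hm2 := main2 F
    simp only [hF] at hm2
    simp only [hB, hLone] at hm2
    exact hm2
  -- step 1: replace f ∘ T j by f
  have hL1 := tendsto_eLpNorm_comp μ T hT hTid f hf
  have hL1r : Tendsto (fun j => (eLpNorm (fun y => f (T j y) - f y) 2 μ).toReal * K)
      atTop (nhds 0) := by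
    have h0 : Tendsto (fun j => (eLpNorm (fun y => f (T j y) - f y) 2 μ).toReal) atTop
        (nhds 0) := by
      have := (ENNReal.tendsto_toReal (a := 0) (by simp)).comp hL1
      simpa [Function.comp_def] using this
    simpa using h0.mul_const K
  have hdiffb : ∀ j, |∫ q : Y × Y × Y × Y, f (T j q.1) * h j q.2 ∂ν
        - ∫ q : Y × Y × Y × Y, f q.1 * h j q.2 ∂ν|
      ≤ (eLpNorm (fun y => f (T j y) - f y) 2 μ).toReal * K := by
    intro j
    have hfT : MemLp (fun y => f (T j y)) 2 μ := hf.comp_measurePreserving (hT j)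
    have hdμ : MemLp (fun y => f (T j y) - f y) 2 μ := hfT.sub hf
    have hdν : MemLp (fun q : Y × Y × Y × Y => f (T j q.1) - f q.1) 2 ν :=
      hdμ.comp_measurePreserving mpfst
    have hint1 : Integrable (fun q : Y × Y × Y × Y => f (T j q.1) * h j q.2) ν :=
      hIntH _ hfT _ (hmem j)
    have hint2 : Integrable (fun q : Y × Y × Y × Y => f q.1 * h j q.2) ν :=
      hIntH f hf _ (hmem j)
    rw [← integral_sub hint1 hint2]
    have e0 : ∫ q : Y × Y × Y × Y, (f (T j q.1) * h j q.2 - f q.1 * h j q.2) ∂ν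
        = ∫ q : Y × Y × Y × Y, (f (T j q.1) - f q.1) * h j q.2 ∂ν := by
      refine integral_congr_ae (Eventually.of_forall fun q => ?_)
      ring
    rw [e0]
    have hcs := cs_mul hdν (hHmem _ (hmem j))
    rw [hfstnorm (fun y => f (T j y) - f y) hdμ.1, hsndnorm _ (hmem j).1] at hcs
    rw [hKnorm j] at hcs
    exact hcs
  have hstep1 : Tendsto (fun j => ∫ q : Y × Y × Y × Y, f (T j q.1) * h j q.2 ∂ν
      - ∫ q : Y × Y × Y × Y, f q.1 * h j q.2 ∂ν) atTop (nhds 0) :=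
    squeeze_zero_norm hdiffb hL1r
  have hAt : Tendsto (fun j => ∫ q : Y × Y × Y × Y, f (T j q.1) * h j q.2 ∂ν) atTop
      (nhds (c' * ∫ y, f y ∂μ)) := by
    have hh := hstep1.add hBt
    simp only [sub_add_cancel, zero_add] at hh
    exact hh
  -- rewrite the goal
  have hΦ : ∀ j, (fun q : Y × Y × Y × Y => (T j q.1, T1 j q.2.1, T2 j q.2.2.1, T3 j q.2.2.2))
      = ⇑((T j).prodCongr ((T1 j).prodCongr ((T2 j).prodCongr (T3 j)))) := by
    intro j; funext q; rfl
  have hrw : ∀ j, ∫ q, f q.1 * f1 q.2.1 * f2 q.2.2.1 * f3 q.2.2.2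
      ∂(Measure.map (fun q : Y × Y × Y × Y =>
          (T j q.1, T1 j q.2.1, T2 j q.2.2.1, T3 j q.2.2.2)) ν)
      = ∫ q : Y × Y × Y × Y, f (T j q.1) * h j q.2 ∂ν := by
    intro j
    rw [hΦ j, integral_map_equiv]
    refine integral_congr_ae (Eventually.of_forall fun q => ?_)
    show f (T j q.1) * f1 (T1 j q.2.1) * f2 (T2 j q.2.2.1) * f3 (T3 j q.2.2.2)
      = f (T j q.1) * h j q.2
    rw [hhdef]
    ring
  simp only [hrw]
  have hval : (∫ y, f y ∂μ) * (∫ y, f1 y ∂μ) * (∫ y, f2 y ∂μ) * (∫ y, f3 y ∂μ)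
      = c' * ∫ y, f y ∂μ := by
    rw [hc'def]
    ring
  rw [hval]
  exact hAt
end

section
/- Let R=(S,R_x) be a relatively weakly mixing extension, i.e., the skew product R×_X R = (S, R_x×R_x) acting on X×Y×Y is ergodic with respect to μ⊗μ⊗μ. Then for all measurable sets A,B ⊂ Y, ∫_X (1/N) Σ_{p=1}^{N} ( μ(C(x,p)A ∩ B) − μ(A)μ(B) )² dμ(x) → 0 as N→∞. -/
open MeasureTheory Filter Set
open scoped ENNReal symmDiff

section ProofAux

open Function
open scoped RealInnerProductSpace
set_option maxHeartbeats 1000000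
set_option synthInstance.maxHeartbeats 100000
set_option linter.unusedSectionVars false
set_option linter.unusedVariables false
set_option linter.unreachableTactic false
set_option linter.unusedTactic false

section ME
variable {Ω : Type*} [MeasurableSpace Ω]

theorem mean_ergodic_correlation (m : Measure Ω) [IsProbabilityMeasure m]
    {T : Ω → Ω} (hT : Ergodic T m) {U V : Set Ω} (hU : MeasurableSet U) (hV : MeasurableSet V) :
    Tendsto (fun N : ℕ => (N : ℝ)⁻¹ * ∑ p ∈ Finset.Icc 1 N, (m (U ∩ T^[p] ⁻¹' V)).toReal)
      atTop (nhds ((m U).toReal * (m V).toReal)) := by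
  haveI : Fact ((1:ℝ≥0∞) ≤ 2) := ⟨one_le_two⟩
  set K : Lp ℝ 2 m →L[ℝ] Lp ℝ 2 m :=
    (Lp.compMeasurePreservingₗᵢ ℝ T hT.toMeasurePreserving).toContinuousLinearMap with hKdef
  have hK : ‖K‖ ≤ 1 := LinearIsometry.norm_toContinuousLinearMap_le _
  have hKapp : ∀ g : Lp ℝ 2 m, K g = Lp.compMeasurePreserving T hT.toMeasurePreserving g :=
    fun g => rfl
  set G : Lp ℝ 2 m := indicatorConstLp 2 hV (measure_ne_top m V) (1:ℝ) with hGdef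
  -- iterates of the Koopman operator
  have hiter : ∀ q : ℕ, ((K^[q] G : Lp ℝ 2 m) : Ω → ℝ)
      =ᵐ[m] fun ω => Set.indicator V (fun _ => (1:ℝ)) (T^[q] ω) := by
    intro q
    induction q with
    | zero =>
      simpa using indicatorConstLp_coeFn (p := 2) (hs := hV) (hμs := measure_ne_top m V) (c := (1:ℝ))
    | succ q ih =>
      rw [Function.iterate_succ_apply']
      have h1 : ((K (K^[q] G) : Lp ℝ 2 m) : Ω → ℝ) =ᵐ[m] ((K^[q] G : Lp ℝ 2 m) : Ω → ℝ) ∘ T := by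
        rw [hKapp]; exact Lp.coeFn_compMeasurePreserving _ _
      have h2 := hT.toMeasurePreserving.quasiMeasurePreserving.ae_eq_comp ih
      refine (h1.trans h2).trans ?_
      refine Filter.EventuallyEq.of_eq (funext fun ω => ?_)
      simp [Function.comp, Function.iterate_succ_apply]
  -- inner products with indicators
  have hinner : ∀ (q : ℕ) {W : Set Ω} (hW : MeasurableSet W),
      ⟪K^[q] G, indicatorConstLp 2 hW (measure_ne_top m W) (1:ℝ)⟫
        = (m (T^[q] ⁻¹' V ∩ W)).toReal := by
    intro q W hW
    rw [MeasureTheory.L2.inner_def]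
    have hcongr : (fun a => (inner ℝ ((K^[q] G : Lp ℝ 2 m) a)
          ((indicatorConstLp 2 hW (measure_ne_top m W) (1:ℝ) : Lp ℝ 2 m) a) : ℝ))
        =ᵐ[m] fun a => Set.indicator (T^[q] ⁻¹' V ∩ W) (fun _ => (1:ℝ)) a := by
      filter_upwards [hiter q,
        indicatorConstLp_coeFn (p := 2) (hs := hW) (hμs := measure_ne_top m W) (c := (1:ℝ))]
        with a ha hb
      rw [ha, hb, RCLike.inner_apply]
      by_cases h : T^[q] a ∈ V <;> by_cases h' : a ∈ W <;>
        simp [Set.indicator_apply, h, h', Set.mem_inter_iff, Set.mem_preimage]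
    rw [integral_congr_ae hcongr,
      MeasureTheory.integral_indicator_const _
        ((hV.preimage (hT.toMeasurePreserving.measurable.iterate q)).inter hW)]
    simp [measureReal_def]
  -- inner products with Birkhoff averages
  have hbA : ∀ (N : ℕ) {W : Set Ω} (hW : MeasurableSet W),
      ⟪birkhoffAverage ℝ K _root_.id N (K G),
          indicatorConstLp 2 hW (measure_ne_top m W) (1:ℝ)⟫
        = (N : ℝ)⁻¹ * ∑ p ∈ Finset.range N, (m (T^[p+1] ⁻¹' V ∩ W)).toReal := by
    intro N W hW
    rw [birkhoffAverage, birkhoffSum, real_inner_smul_left, sum_inner]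
    congr 1
    refine Finset.sum_congr rfl fun p _ => ?_
    rw [← Function.iterate_succ_apply]
    exact hinner (p+1) hW
  -- convergence from the von Neumann theorem
  set P : Lp ℝ 2 m := ↑((LinearMap.eqLocus (K : Lp ℝ 2 m →ₗ[ℝ] Lp ℝ 2 m) ((1 : Lp ℝ 2 m →L[ℝ] Lp ℝ 2 m) : Lp ℝ 2 m →ₗ[ℝ] Lp ℝ 2 m)).orthogonalProjectionOnto (K G))
    with hPdef
  have hcv : Tendsto (fun N => birkhoffAverage ℝ K _root_.id N (K G)) atTop (nhds P) :=
    K.tendsto_birkhoffAverage_orthogonalProjection hK (K G)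
  -- P is a fixed point of K, hence a.e. constant
  have hPfix : K P = P := by
    have := ((LinearMap.eqLocus (K : Lp ℝ 2 m →ₗ[ℝ] Lp ℝ 2 m) ((1 : Lp ℝ 2 m →L[ℝ] Lp ℝ 2 m) : Lp ℝ 2 m →ₗ[ℝ] Lp ℝ 2 m)).orthogonalProjectionOnto (K G)).2
    rw [LinearMap.mem_eqLocus] at this
    simpa [hPdef] using this
  obtain ⟨cst, hcst⟩ : ∃ cst : ℝ, (P : Ω → ℝ) =ᵐ[m] fun _ => cst := by
    have hval : (P : Lp ℝ 2 m).1.compMeasurePreserving T hT.toMeasurePreserving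
        = (P : Lp ℝ 2 m).1 := by
      have := congrArg Subtype.val hPfix
      rw [hKapp] at this
      exact this
    obtain ⟨cst, hc⟩ := hT.eq_const_of_compMeasurePreserving_eq hval
    refine ⟨cst, ?_⟩
    have := MeasureTheory.AEEqFun.coeFn_const Ω cst (μ := m)
    rw [← hc] at this
    exact this
  -- inner product of P with indicators
  have hPinner : ∀ {W : Set Ω} (hW : MeasurableSet W),
      ⟪P, indicatorConstLp 2 hW (measure_ne_top m W) (1:ℝ)⟫ = cst * (m W).toReal := by
    intro W hW
    rw [MeasureTheory.L2.inner_def]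
    have hcongr : (fun a => (inner ℝ ((P : Lp ℝ 2 m) a)
          ((indicatorConstLp 2 hW (measure_ne_top m W) (1:ℝ) : Lp ℝ 2 m) a) : ℝ))
        =ᵐ[m] fun a => Set.indicator W (fun _ => cst) a := by
      filter_upwards [hcst,
        indicatorConstLp_coeFn (p := 2) (hs := hW) (hμs := measure_ne_top m W) (c := (1:ℝ))]
        with a ha hb
      rw [ha, hb, RCLike.inner_apply]
      by_cases h' : a ∈ W <;> simp [Set.indicator_apply, h']
    rw [integral_congr_ae hcongr, MeasureTheory.integral_indicator_const _ hW]
    simp [mul_comm, measureReal_def]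
  -- identify the constant
  have hVq : ∀ q : ℕ, m (T^[q] ⁻¹' V) = m V := fun q =>
    (hT.toMeasurePreserving.iterate q).measure_preimage hV.nullMeasurableSet
  have hcst_eq : cst = (m V).toReal := by
    have h1 : Tendsto (fun N => ⟪birkhoffAverage ℝ K _root_.id N (K G),
        indicatorConstLp 2 MeasurableSet.univ (measure_ne_top m univ) (1:ℝ)⟫) atTop
        (nhds ⟪P, indicatorConstLp 2 MeasurableSet.univ (measure_ne_top m univ) (1:ℝ)⟫) :=
      hcv.inner tendsto_const_nhds
    have h2 : ∀ᶠ N : ℕ in atTop, ⟪birkhoffAverage ℝ K _root_.id N (K G),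
        indicatorConstLp 2 MeasurableSet.univ (measure_ne_top m univ) (1:ℝ)⟫
        = (m V).toReal := by
      filter_upwards [eventually_ge_atTop 1] with N hN
      rw [hbA N MeasurableSet.univ]
      have : ∀ p ∈ Finset.range N, (m (T^[p+1] ⁻¹' V ∩ univ)).toReal = (m V).toReal := by
        intro p _; rw [Set.inter_univ, hVq]
      rw [Finset.sum_congr rfl this, Finset.sum_const, Finset.card_range, nsmul_eq_mul,
        ← mul_assoc, inv_mul_cancel₀ (by positivity : (N:ℝ) ≠ 0), one_mul]
    have h3 : Tendsto (fun _ : ℕ => (m V).toReal) atTop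
        (nhds ⟪P, indicatorConstLp 2 MeasurableSet.univ (measure_ne_top m univ) (1:ℝ)⟫) :=
      h1.congr' h2
    have h4 := tendsto_nhds_unique h3 tendsto_const_nhds
    rw [hPinner MeasurableSet.univ] at h4
    simpa using h4
  -- conclude
  have hmain : Tendsto (fun N => ⟪birkhoffAverage ℝ K _root_.id N (K G),
      indicatorConstLp 2 hU (measure_ne_top m U) (1:ℝ)⟫) atTop
      (nhds ((m U).toReal * (m V).toReal)) := by
    have := Filter.Tendsto.inner (𝕜 := ℝ) hcv (tendsto_const_nhds
      (x := (indicatorConstLp 2 hU (measure_ne_top m U) (1:ℝ) : Lp ℝ 2 m)) (f := atTop))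
    rw [hPinner hU, hcst_eq] at this
    simpa [mul_comm] using this
  refine hmain.congr fun N => ?_
  rw [hbA N hU]
  congr 1
  rw [← Finset.Ico_add_one_right_eq_Icc, Finset.sum_Ico_eq_sum_range]
  refine Finset.sum_congr (by simp) fun p _ => ?_
  rw [Set.inter_comm, add_comm]

end ME

section MyAux

variable {X Y : Type*} [MeasurableSpace X] [MeasurableSpace Y]

/-- The cocycle as a measurable equivalence. -/
def myCocE (S : X → X) (c : X → Y ≃ᵐ Y) (x : X) : ℕ → Y ≃ᵐ Y
  | 0 => MeasurableEquiv.refl Y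
  | p + 1 => (myCocE S c x p).trans (c (S^[p] x))

lemma myCocE_coe (S : X → X) (c : X → Y ≃ᵐ Y) (x : X) (p : ℕ) :
    ⇑(myCocE S c x p) = cocycleF S (fun x => ⇑(c x)) x p := by
  induction p with
  | zero => rfl
  | succ p ih => funext y; simp [myCocE, cocycleF, ih, MeasurableEquiv.coe_trans]

lemma myCocE_mp {ν : Measure Y} (S : X → X) (c : X → Y ≃ᵐ Y)
    (hcp : ∀ x, MeasurePreserving (c x) ν ν) (x : X) (p : ℕ) :
    MeasurePreserving (myCocE S c x p) ν ν := by
  induction p with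
  | zero => exact MeasurePreserving.id ν
  | succ p ih =>
    have := (hcp (S^[p] x)).comp ih
    simpa [myCocE, MeasurableEquiv.coe_trans] using this

lemma myCocycle_measurable {S : X → X} {c : X → Y ≃ᵐ Y} (hSm : Measurable S)
    (hcm : Measurable fun p : X × Y => c p.1 p.2) (p : ℕ) :
    Measurable fun q : X × Y => cocycleF S (fun x => ⇑(c x)) q.1 p q.2 := by
  induction p with
  | zero => exact measurable_snd
  | succ p ih =>
    have : (fun q : X × Y => cocycleF S (fun x => ⇑(c x)) q.1 (p+1) q.2)
        = (fun r : X × Y => c r.1 r.2) ∘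
          fun q : X × Y => (S^[p] q.1, cocycleF S (fun x => ⇑(c x)) q.1 p q.2) := rfl
    rw [this]
    exact hcm.comp (((hSm.iterate p).comp measurable_fst).prodMk ih)

lemma mySkew_iterate (S : X → X) (c : X → Y ≃ᵐ Y) (p : ℕ) (q : X × Y × Y) :
    (fun q : X × Y × Y => (S q.1, c q.1 q.2.1, c q.1 q.2.2))^[p] q
      = (S^[p] q.1, cocycleF S (fun x => ⇑(c x)) q.1 p q.2.1,
          cocycleF S (fun x => ⇑(c x)) q.1 p q.2.2) := by
  induction p with
  | zero => rfl
  | succ p ih =>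
    rw [Function.iterate_succ_apply', ih]
    simp [cocycleF, Function.iterate_succ_apply']

end MyAux

end ProofAux

set_option maxHeartbeats 1000000
set_option synthInstance.maxHeartbeats 100000
set_option linter.unusedVariables false
set_option linter.unreachableTactic false
set_option linter.unusedTactic false

/-- If the extension `R = (S, R_x)` is relatively weakly mixing, i.e.
`R ×_X R = (S, R_x × R_x)` is ergodic on `X × Y × Y` for `μ ⊗ ν ⊗ ν`, then for all
measurable `A, B ⊆ Y`,
`∫_X (1/N) Σ_{p=1}^N (ν(C(x,p)A ∩ B) − ν(A)ν(B))² dμ(x) → 0` as `N → ∞`. -/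
theorem relative_weak_mixing_cesaro
    {X Y : Type*} [MeasurableSpace X] [MeasurableSpace Y]
    (μ : Measure X) (ν : Measure Y) [IsProbabilityMeasure μ] [IsProbabilityMeasure ν]
    (S : X → X) (hSm : Measurable S) (hS : MeasurePreserving S μ μ)
    (c : X → Y ≃ᵐ Y) (hcm : Measurable fun p : X × Y => c p.1 p.2)
    (hcp : ∀ x, MeasurePreserving (c x) ν ν)
    (herg : Ergodic (fun q : X × Y × Y => (S q.1, c q.1 q.2.1, c q.1 q.2.2))
      (μ.prod (ν.prod ν))) :
    ∀ A B : Set Y, MeasurableSet A → MeasurableSet B →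
      Tendsto (fun N : ℕ => ∫ x, (N : ℝ)⁻¹ * ∑ p ∈ Finset.Icc 1 N,
          ((ν (cocycleF S (fun x => ⇑(c x)) x p '' A ∩ B)).toReal -
            (ν A).toReal * (ν B).toReal) ^ 2 ∂μ)
        atTop (nhds 0) := by
  intro A B hA hB
  set a : ℝ := (ν A).toReal with ha
  set b : ℝ := (ν B).toReal with hb
  set T : X × Y × Y → X × Y × Y := fun q => (S q.1, c q.1 q.2.1, c q.1 q.2.2) with hTdef
  set m : Measure (X × Y × Y) := μ.prod (ν.prod ν) with hmdef
  have hTm : Measurable T :=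
    (hSm.comp measurable_fst).prodMk
      ((hcm.comp (measurable_fst.prodMk (measurable_fst.comp measurable_snd))).prodMk
        (hcm.comp (measurable_fst.prodMk (measurable_snd.comp measurable_snd))))
  set D : ℕ → X → Set Y := fun p x => A ∩ (cocycleF S (fun x => ⇑(c x)) x p) ⁻¹' B with hDdef
  -- image measure = preimage measure
  have h_img : ∀ p x, ν (cocycleF S (fun x => ⇑(c x)) x p '' A ∩ B) = ν (D p x) := by
    intro p x
    have hD : D p x = A ∩ ⇑(myCocE S c x p) ⁻¹' B := by
      simp only [hDdef, myCocE_coe]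
    rw [← myCocE_coe S c x p, hD]
    set e := myCocE S c x p
    have h1 : ⇑e '' A ∩ B = ⇑e '' (A ∩ ⇑e ⁻¹' B) := (Set.image_inter_preimage ⇑e A B).symm
    have h2 : ⇑e '' (A ∩ ⇑e ⁻¹' B) = ⇑e.symm ⁻¹' (A ∩ ⇑e ⁻¹' B) := by
      rw [MeasurableEquiv.image_eq_preimage_symm]
    rw [h1, h2]
    exact (MeasurePreserving.symm e (myCocE_mp S c hcp x p)).measure_preimage
      ((hA.inter (hB.preimage e.measurable)).nullMeasurableSet)
  -- measurability of x ↦ ν (D p x)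
  have hDmeas : ∀ p, Measurable fun x => ν (D p x) := by
    intro p
    have hW : MeasurableSet {q : X × Y | q.2 ∈ A ∧ cocycleF S (fun x => ⇑(c x)) q.1 p q.2 ∈ B} :=
      (measurable_snd hA).inter ((myCocycle_measurable hSm hcm p) hB)
    exact measurable_measure_prodMk_left hW
  have hDle : ∀ p x, ν (D p x) ≤ 1 := fun p x => prob_le_one
  set g : ℕ → X → ℝ := fun p x => (ν (D p x)).toReal with hgdef
  have hgmeas : ∀ p, Measurable (g p) := fun p => (hDmeas p).ennreal_toReal
  have hg01 : ∀ p x, 0 ≤ g p x ∧ g p x ≤ 1 := by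
    intro p x
    exact ⟨ENNReal.toReal_nonneg, by
      simpa using ENNReal.toReal_mono ENNReal.one_ne_top (hDle p x)⟩
  have hab : 0 ≤ a * b ∧ a * b ≤ 1 := by
    constructor
    · positivity
    · have h1 : a ≤ 1 := by simpa using ENNReal.toReal_mono ENNReal.one_ne_top (prob_le_one (μ := ν))
      have h2 : b ≤ 1 := by simpa using ENNReal.toReal_mono ENNReal.one_ne_top (prob_le_one (μ := ν))
      nlinarith [ENNReal.toReal_nonneg (a := ν A), ENNReal.toReal_nonneg (a := ν B)]
  -- the four sets
  set U2 : Set (X × Y × Y) := univ ×ˢ (A ×ˢ A) with hU2def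
  set V2 : Set (X × Y × Y) := univ ×ˢ (B ×ˢ B) with hV2def
  set U1 : Set (X × Y × Y) := univ ×ˢ (A ×ˢ univ) with hU1def
  set V1 : Set (X × Y × Y) := univ ×ˢ (B ×ˢ univ) with hV1def
  have hU2m : MeasurableSet U2 := MeasurableSet.univ.prod (hA.prod hA)
  have hV2m : MeasurableSet V2 := MeasurableSet.univ.prod (hB.prod hB)
  have hU1m : MeasurableSet U1 := MeasurableSet.univ.prod (hA.prod MeasurableSet.univ)
  have hV1m : MeasurableSet V1 := MeasurableSet.univ.prod (hB.prod MeasurableSet.univ)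
  -- fibers
  have hfib2 : ∀ p x, Prod.mk x ⁻¹' (U2 ∩ T^[p] ⁻¹' V2) = (D p x) ×ˢ (D p x) := by
    intro p x
    ext ⟨y, z⟩
    simp only [hU2def, hV2def, Set.mem_preimage, Set.mem_inter_iff, Set.mem_prod, Set.mem_univ,
      true_and, hDdef, hTdef, mySkew_iterate S c p]
    all_goals tauto
  have hfib1 : ∀ p x, Prod.mk x ⁻¹' (U1 ∩ T^[p] ⁻¹' V1) = (D p x) ×ˢ (univ : Set Y) := by
    intro p x
    ext ⟨y, z⟩
    simp only [hU1def, hV1def, Set.mem_preimage, Set.mem_inter_iff, Set.mem_prod, Set.mem_univ,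
      true_and, and_true, hDdef, hTdef, mySkew_iterate S c p]
    all_goals tauto
  -- measures via Fubini
  have hm2 : ∀ p, m (U2 ∩ T^[p] ⁻¹' V2) = ∫⁻ x, ν (D p x) * ν (D p x) ∂μ := by
    intro p
    rw [hmdef, Measure.prod_apply (hU2m.inter ((hTm.iterate p) hV2m))]
    refine lintegral_congr fun x => ?_
    rw [hfib2 p x, Measure.prod_prod]
  have hm1 : ∀ p, m (U1 ∩ T^[p] ⁻¹' V1) = ∫⁻ x, ν (D p x) ∂μ := by
    intro p
    rw [hmdef, Measure.prod_apply (hU1m.inter ((hTm.iterate p) hV1m))]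
    refine lintegral_congr fun x => ?_
    rw [hfib1 p x, Measure.prod_prod, measure_univ, mul_one]
  -- real integral identities
  have hI2 : ∀ p, ∫ x, (g p x) ^ 2 ∂μ = (m (U2 ∩ T^[p] ⁻¹' V2)).toReal := by
    intro p
    rw [hm2 p, ← integral_toReal (f := fun x => ν (D p x) * ν (D p x)) ((hDmeas p).mul (hDmeas p)).aemeasurable
      (ae_of_all _ fun x => lt_of_le_of_lt
        (mul_le_mul' (hDle p x) (hDle p x)) (by norm_num))]
    refine integral_congr_ae (ae_of_all _ fun x => ?_)
    show g p x ^ 2 = (ν (D p x) * ν (D p x)).toReal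
    rw [ENNReal.toReal_mul]; ring
  have hI1 : ∀ p, ∫ x, g p x ∂μ = (m (U1 ∩ T^[p] ⁻¹' V1)).toReal := by
    intro p
    rw [hm1 p, ← integral_toReal (hDmeas p).aemeasurable
      (ae_of_all _ fun x => lt_of_le_of_lt (hDle p x) (by norm_num))]
  -- integrabilities
  have hint1 : ∀ p, Integrable (g p) μ := by
    intro p
    refine Integrable.mono' (integrable_const 1) (hgmeas p).aestronglyMeasurable
      (ae_of_all _ fun x => ?_)
    rw [Real.norm_eq_abs, abs_of_nonneg (hg01 p x).1]
    exact (hg01 p x).2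
  have hint2 : ∀ p, Integrable (fun x => (g p x) ^ 2) μ := by
    intro p
    refine Integrable.mono' (integrable_const 1) ((hgmeas p).pow_const 2).aestronglyMeasurable
      (ae_of_all _ fun x => ?_)
    rw [Real.norm_eq_abs, abs_of_nonneg (by positivity)]
    nlinarith [(hg01 p x).1, (hg01 p x).2]
  have hintsq : ∀ p, Integrable (fun x => (g p x - a * b) ^ 2) μ := by
    intro p
    refine Integrable.mono' (integrable_const 1) (((hgmeas p).sub_const _).pow_const 2).aestronglyMeasurable
      (ae_of_all _ fun x => ?_)
    rw [Real.norm_eq_abs, abs_of_nonneg (by positivity)]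
    nlinarith [(hg01 p x).1, (hg01 p x).2, hab.1, hab.2]
  -- expansion of each integral
  have hexp : ∀ p, ∫ x, (g p x - a * b) ^ 2 ∂μ
      = (m (U2 ∩ T^[p] ⁻¹' V2)).toReal
        - 2 * (a * b) * (m (U1 ∩ T^[p] ⁻¹' V1)).toReal + (a * b) ^ 2 := by
    intro p
    have heq : (fun x => (g p x - a * b) ^ 2)
        = fun x => (g p x) ^ 2 - 2 * (a * b) * g p x + (a * b) ^ 2 := by
      funext x; ring
    have hmul : Integrable (fun x => 2 * (a * b) * g p x) μ := (hint1 p).const_mul _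
    have hsub : Integrable (fun x => g p x ^ 2 - 2 * (a * b) * g p x) μ := (hint2 p).sub hmul
    rw [heq, integral_add hsub (integrable_const _),
      integral_sub (hint2 p) hmul, integral_const_mul, integral_const,
      hI2 p, hI1 p]
    simp
  -- the two ergodic averages
  have hlim2 := mean_ergodic_correlation m herg hU2m hV2m
  have hlim1 := mean_ergodic_correlation m herg hU1m hV1m
  have hmU2 : (m U2).toReal = a * a := by
    rw [hmdef, hU2def, Measure.prod_prod, Measure.prod_prod, measure_univ, one_mul,
      ENNReal.toReal_mul, ha]
  have hmV2 : (m V2).toReal = b * b := by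
    rw [hmdef, hV2def, Measure.prod_prod, Measure.prod_prod, measure_univ, one_mul,
      ENNReal.toReal_mul, hb]
  have hmU1 : (m U1).toReal = a := by
    rw [hmdef, hU1def, Measure.prod_prod, Measure.prod_prod, measure_univ, one_mul,
      measure_univ, mul_one, ha]
  have hmV1 : (m V1).toReal = b := by
    rw [hmdef, hV1def, Measure.prod_prod, Measure.prod_prod, measure_univ, one_mul,
      measure_univ, mul_one, hb]
  rw [hmU2, hmV2] at hlim2
  rw [hmU1, hmV1] at hlim1
  -- combine
  have hcomb : Tendsto (fun N : ℕ =>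
      ((N : ℝ)⁻¹ * ∑ p ∈ Finset.Icc 1 N, (m (U2 ∩ T^[p] ⁻¹' V2)).toReal)
        - 2 * (a * b) * ((N : ℝ)⁻¹ * ∑ p ∈ Finset.Icc 1 N, (m (U1 ∩ T^[p] ⁻¹' V1)).toReal)
        + (a * b) ^ 2) atTop (nhds 0) := by
    have := (hlim2.sub (hlim1.const_mul (2 * (a * b)))).add
      (tendsto_const_nhds (x := (a * b) ^ 2) (f := atTop))
    have hval : a * a * (b * b) - 2 * (a * b) * (a * b) + (a * b) ^ 2 = 0 := by ring
    rwa [hval] at this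
  refine hcomb.congr' ?_
  filter_upwards [eventually_ge_atTop 1] with N hN
  have hN0 : (N : ℝ) ≠ 0 := Nat.cast_ne_zero.mpr (by omega)
  have step1 : ∫ x, (N : ℝ)⁻¹ * ∑ p ∈ Finset.Icc 1 N,
      ((ν (cocycleF S (fun x => ⇑(c x)) x p '' A ∩ B)).toReal - a * b) ^ 2 ∂μ
      = (N : ℝ)⁻¹ * ∑ p ∈ Finset.Icc 1 N, ∫ x, (g p x - a * b) ^ 2 ∂μ := by
    have hptwise : ∀ x, (N : ℝ)⁻¹ * ∑ p ∈ Finset.Icc 1 N,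
        ((ν (cocycleF S (fun x => ⇑(c x)) x p '' A ∩ B)).toReal - a * b) ^ 2
        = (N : ℝ)⁻¹ * ∑ p ∈ Finset.Icc 1 N, (g p x - a * b) ^ 2 := by
      intro x
      refine congrArg _ (Finset.sum_congr rfl fun p _ => ?_)
      simp only [h_img p x, hgdef]
    rw [integral_congr_ae (ae_of_all _ hptwise), integral_const_mul,
      integral_finset_sum _ (fun p _ => hintsq p)]
  rw [step1]
  have hsum : ∑ p ∈ Finset.Icc 1 N, ∫ x, (g p x - a * b) ^ 2 ∂μ
      = (∑ p ∈ Finset.Icc 1 N, (m (U2 ∩ T^[p] ⁻¹' V2)).toReal)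
        - 2 * (a * b) * (∑ p ∈ Finset.Icc 1 N, (m (U1 ∩ T^[p] ⁻¹' V1)).toReal)
        + N * (a * b) ^ 2 := by
    rw [Finset.sum_congr rfl (fun p _ => hexp p), Finset.sum_add_distrib, Finset.sum_sub_distrib,
      ← Finset.mul_sum, Finset.sum_const, Nat.card_Icc, Nat.add_sub_cancel, nsmul_eq_mul]
  rw [hsum]
  field_simp
end
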